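/- arXiv:1103.3745 — 9 statements merged into one kernel-verified Lean document; each statement's English description precedes it below -/
import Mathlib

section
/- Let n ≥ 1, let E be a transitive and irreflexive relation on the index set {1,…,n}, and let each variable X_i have a nonempty integer interval domain [min_i, max_i] that is preprocessed with respect to E, i.e., min_i ≤ min_j and max_i ≤ max_j for every (i,j) ∈ E. If there exists an injective assignment x with x_i ∈ [min_i, max_i] for all i (a solution of the AllDifferent constraint alone), then there exists an injective assignment x with x_i ∈ [min_i, max_i] for all i and additionally x_i < x_j for every (i,j) ∈ E (a solution of AllDiffPrec). -/
/-- If `E` is a transitive irreflexive precedence relation on `{1,…,n}`,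
the interval domains `[mn i, mx i]` are nonempty and preprocessed w.r.t. `E`
(`mn i ≤ mn j` and `mx i ≤ mx j` along every edge), and the `AllDifferent`
constraint alone has a solution, then `AllDiffPrec` has a solution. -/
theorem alldiffprec_solution_of_alldifferent_solution
    (n : ℕ) (hn : 1 ≤ n)
    (E : Fin n → Fin n → Prop)
    (hTrans : Transitive E) (hIrrefl : Irreflexive E)
    (mn mx : Fin n → ℤ)
    (hNonempty : ∀ i, mn i ≤ mx i)
    (hPre : ∀ i j, E i j → mn i ≤ mn j ∧ mx i ≤ mx j)
    (hAllDiff : ∃ x : Fin n → ℤ, Function.Injective x ∧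
      ∀ i, x i ∈ Set.Icc (mn i) (mx i)) :
    ∃ x : Fin n → ℤ, Function.Injective x ∧
      (∀ i, x i ∈ Set.Icc (mn i) (mx i)) ∧
      ∀ i j, E i j → x i < x j := by
  classical
  obtain ⟨x0, hinj0, hdom0⟩ := hAllDiff
  set S : Finset (Fin n × Fin n) := Finset.univ.filter (fun p => E p.1 p.2) with hS
  suffices H : ∀ N : ℕ, ∀ x : Fin n → ℤ, Function.Injective x →
      (∀ i, x i ∈ Set.Icc (mn i) (mx i)) →
      (∑ p ∈ S, (x p.1 - x p.2).toNat) ≤ N →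
      ∃ y : Fin n → ℤ, Function.Injective y ∧
        (∀ i, y i ∈ Set.Icc (mn i) (mx i)) ∧
        ∀ i j, E i j → y i < y j by
    exact H _ x0 hinj0 hdom0 le_rfl
  intro N
  induction N with
  | zero =>
    intro x hinj hdom hΦ
    refine ⟨x, hinj, hdom, ?_⟩
    intro i j hij
    rcases lt_trichotomy (x i) (x j) with h | h | h
    · exact h
    · exact absurd hij (by rw [hinj h]; exact fun hh => hIrrefl j hh)
    · exfalso
      have hmem : (i, j) ∈ S := by simp [hS, hij]
      have hle := Finset.single_le_sum (f := fun p : Fin n × Fin n => (x p.1 - x p.2).toNat)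
        (fun p _ => Nat.zero_le _) hmem
      simp only at hle
      omega
  | succ N ih =>
    intro x hinj hdom hΦ
    by_cases hviol : ∃ i j, E i j ∧ x j < x i
    · obtain ⟨i, j, hij, hlt⟩ := hviol
      have hne : i ≠ j := fun h => hIrrefl j (h ▸ hij)
      set σ := Equiv.swap i j with hσ
      have hσi : σ i = j := Equiv.swap_apply_left i j
      have hσj : σ j = i := Equiv.swap_apply_right i j
      set y : Fin n → ℤ := fun k => x (σ k) with hy
      have hyinj : Function.Injective y := hinj.comp σ.injective
      have hydom : ∀ k, y k ∈ Set.Icc (mn k) (mx k) := by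
        intro k
        by_cases hk : k = i
        · subst hk
          have h1 := (hPre k j hij).1
          have h2 := (hdom j).1
          have h3 := (hdom k).2
          simp only [hy, hσi, Set.mem_Icc]
          constructor <;> omega
        · by_cases hk' : k = j
          · subst hk'
            have h1 := (hPre i k hij).2
            have h2 := (hdom k).1
            have h3 := (hdom i).2
            simp only [hy, hσj, Set.mem_Icc]
            constructor <;> omega
          · have : σ k = k := Equiv.swap_apply_of_ne_of_ne hk hk'
            simp only [hy, this]
            exact hdom k
      -- the potential strictly decreases
      have hnotji : ¬ E j i := fun h => hIrrefl i (hTrans hij h)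
      set ψ : Fin n × Fin n → Fin n × Fin n :=
        fun p => if E (σ p.1) (σ p.2) then (σ p.1, σ p.2) else p with hψ
      have hψS : ∀ p ∈ S, ψ p ∈ S := by
        intro p hp
        by_cases hc : E (σ p.1) (σ p.2)
        · simp [hψ, hc, hS]
        · simpa [hψ, hc] using hp
      have hψψ : ∀ p ∈ S, ψ (ψ p) = p := by
        intro p hp
        have hpE : E p.1 p.2 := by simpa [hS] using hp
        by_cases hc : E (σ p.1) (σ p.2)
        · have h1 : σ (σ p.1) = p.1 := Equiv.swap_apply_self i j p.1
          have h2 : σ (σ p.2) = p.2 := Equiv.swap_apply_self i j p.2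
          simp [hψ, hc, h1, h2, hpE]
        · simp [hψ, hc]
      have hrw : (∑ p ∈ S, (x p.1 - x p.2).toNat)
          = ∑ p ∈ S, (x (ψ p).1 - x (ψ p).2).toNat := by
        refine Finset.sum_nbij' (i := ψ) (j := ψ) hψS hψS hψψ hψψ ?_
        intro p hp
        rw [hψψ p hp]
      have key : (∑ p ∈ S, (x (σ p.1) - x (σ p.2)).toNat)
          < ∑ p ∈ S, (x (ψ p).1 - x (ψ p).2).toNat := by
        refine Finset.sum_lt_sum ?_ ⟨(i, j), by simp [hS, hij], ?_⟩
        · intro p hp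
          have hpE : E p.1 p.2 := by simpa [hS] using hp
          by_cases hc : E (σ p.1) (σ p.2)
          · simp [hψ, hc]
          · simp only [hψ, if_neg hc]
            by_cases hai : p.1 = i
            · by_cases hbj : p.2 = j
              · rw [hai, hbj, hσi, hσj]; omega
              · by_cases hbi : p.2 = i
                · exact absurd hpE (by rw [hai, hbi]; exact fun h => hIrrefl i h)
                · have h2 : σ p.2 = p.2 := Equiv.swap_apply_of_ne_of_ne hbi hbj
                  rw [hai, hσi, h2]
                  omega
            · by_cases haj : p.1 = j
              · by_cases hbi : p.2 = i
                · exact absurd hpE (by rw [haj, hbi]; exact fun h => hnotji h)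
                · by_cases hbj : p.2 = j
                  · exact absurd hpE (by rw [haj, hbj]; exact fun h => hIrrefl j h)
                  · -- E j p.2 with E i j gives E i p.2 = E (σ p.1) (σ p.2), contradiction
                    exfalso
                    apply hc
                    have h2 : σ p.2 = p.2 := Equiv.swap_apply_of_ne_of_ne hbi hbj
                    rw [haj, hσj, h2]
                    exact hTrans hij (haj ▸ hpE)
              · have h1 : σ p.1 = p.1 := Equiv.swap_apply_of_ne_of_ne hai haj
                by_cases hbi : p.2 = i
                · exfalso
                  apply hc
                  rw [h1, hbi, hσi]
                  exact hTrans (hbi ▸ hpE) hij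
                · by_cases hbj : p.2 = j
                  · rw [h1, hbj, hσj]
                    omega
                  · exfalso
                    apply hc
                    rw [h1, Equiv.swap_apply_of_ne_of_ne hbi hbj]
                    exact hpE
        · -- strict at (i, j)
          have hcond : ¬ E (σ (i, j).1) (σ (i, j).2) := by
            simpa [hσi, hσj] using hnotji
          simp only [hψ, if_neg hcond, hσi, hσj]
          omega
      have hdec : (∑ p ∈ S, (y p.1 - y p.2).toNat) ≤ N := by
        have : (∑ p ∈ S, (y p.1 - y p.2).toNat)
            = ∑ p ∈ S, (x (σ p.1) - x (σ p.2)).toNat := rfl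
        rw [this]
        omega
      exact ih y hyinj hydom hdec
    · push_neg at hviol
      refine ⟨x, hinj, hdom, fun a b hab => ?_⟩
      have h1 := hviol a b hab
      have h2 : x a ≠ x b := fun h => hIrrefl b ((hinj h) ▸ hab)
      omega
end

section
/- Let E be a transitive and irreflexive relation on {1,…,n} and let the variables have nonempty integer interval domains D(X_j) = [min_j, max_j]. Suppose the precedence constraints are bounds consistent, i.e., min_a < min_b and max_a < max_b for every (a,b) ∈ E, and the AllDifferent constraint is bounds consistent, i.e., for every j and every b ∈ {min_j, max_j} there is an injective assignment y with y_k ∈ D(X_k) for all k and y_j = b. Let i be an index, let v ∈ {min_i, max_i}, and let D' be the domains obtained by direct pruning of X_i = v. Then there exists a solution of AllDiffPrec with x_i = v if and only if there exists an injective assignment z with z_j ∈ D'(X_j) for all j. -/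
open Finset

private def tt {n : ℕ} (E : Fin n → Fin n → Prop) [DecidableRel E]
    (z : Fin n → ℤ) (c d : Fin n) : ℕ :=
  if E c d then (z c - z d).toNat else 0

private def meas {n : ℕ} (E : Fin n → Fin n → Prop) [DecidableRel E]
    (z : Fin n → ℤ) : ℕ :=
  ∑ c, ∑ d, tt E z c d

private lemma meas_swap_lt {n : ℕ} {E : Fin n → Fin n → Prop} [DecidableRel E]
    (hT : Transitive E) (hI : Irreflexive E) {z : Fin n → ℤ} {a b : Fin n}
    (hab : E a b) (hlt : z b < z a) :
    meas E (z ∘ Equiv.swap a b) < meas E z := by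
  have hne : a ≠ b := fun h => hI a (h ▸ hab)
  set z' := z ∘ Equiv.swap a b with hz'
  have hza : z' a = z b := by simp [hz']
  have hzb : z' b = z a := by simp [hz']
  have hzo : ∀ c, c ≠ a → c ≠ b → z' c = z c := by
    intro c h1 h2
    simp [hz', Equiv.swap_apply_of_ne_of_ne h1 h2]
  have hba : ¬ E b a := fun h => hI a (hT hab h)
  set S : Finset (Fin n) := univ \ {a, b} with hS
  have hmemS : ∀ c, c ∈ S → c ≠ a ∧ c ≠ b := by
    intro c hc
    rw [hS] at hc
    simp only [Finset.mem_sdiff, Finset.mem_univ, true_and, Finset.mem_insert,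
      Finset.mem_singleton, not_or] at hc
    exact hc
  have hsplit : ∀ f : Fin n → ℕ, ∑ c, f c = ∑ c ∈ S, f c + (f a + f b) := by
    intro f
    have h := Finset.sum_sdiff (f := f) (Finset.subset_univ ({a, b} : Finset (Fin n)))
    rw [Finset.sum_pair hne] at h
    rw [hS]
    omega
  have hB : ∀ c ∈ S, tt E z' c a + tt E z' c b ≤ tt E z c a + tt E z c b := by
    intro c hc
    obtain ⟨hca, hcb⟩ := hmemS c hc
    by_cases h1 : E c a
    · have h2 : E c b := hT h1 hab
      simp only [tt, if_pos h1, if_pos h2, hza, hzb, hzo c hca hcb]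
      omega
    · by_cases h2 : E c b
      · simp only [tt, if_neg h1, if_pos h2, hza, hzb, hzo c hca hcb]
        omega
      · simp only [tt, if_neg h1, if_neg h2]
        omega
  have hC : ∀ d ∈ S, tt E z' a d + tt E z' b d ≤ tt E z a d + tt E z b d := by
    intro d hd
    obtain ⟨hda, hdb⟩ := hmemS d hd
    by_cases h1 : E b d
    · have h2 : E a d := hT hab h1
      simp only [tt, if_pos h1, if_pos h2, hza, hzb, hzo d hda hdb]
      omega
    · by_cases h2 : E a d
      · simp only [tt, if_neg h1, if_pos h2, hza, hzb, hzo d hda hdb]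
        omega
      · simp only [tt, if_neg h1, if_neg h2]
        omega
  have hD : tt E z' a a + tt E z' a b + (tt E z' b a + tt E z' b b) + 1
      ≤ tt E z a a + tt E z a b + (tt E z b a + tt E z b b) := by
    have haa : ¬ E a a := hI a
    have hbb : ¬ E b b := hI b
    simp only [tt, if_pos hab, if_neg hba, if_neg haa, if_neg hbb, hza, hzb]
    omega
  have h0 : ∑ c ∈ S, ∑ d ∈ S, tt E z' c d = ∑ c ∈ S, ∑ d ∈ S, tt E z c d := by
    refine Finset.sum_congr rfl fun c hc => Finset.sum_congr rfl fun d hd => ?_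
    obtain ⟨hca, hcb⟩ := hmemS c hc
    obtain ⟨hda, hdb⟩ := hmemS d hd
    simp only [tt, hzo c hca hcb, hzo d hda hdb]
  have h2 : ∑ c ∈ S, (tt E z' c a + tt E z' c b) ≤ ∑ c ∈ S, (tt E z c a + tt E z c b) :=
    Finset.sum_le_sum hB
  have h3 : ∑ d ∈ S, tt E z' a d + ∑ d ∈ S, tt E z' b d
      ≤ ∑ d ∈ S, tt E z a d + ∑ d ∈ S, tt E z b d := by
    rw [← Finset.sum_add_distrib, ← Finset.sum_add_distrib]
    exact Finset.sum_le_sum hC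
  have expand : ∀ w : Fin n → ℤ, meas E w
      = ∑ c ∈ S, ∑ d ∈ S, tt E w c d + ∑ c ∈ S, (tt E w c a + tt E w c b)
        + (∑ d ∈ S, tt E w a d + (tt E w a a + tt E w a b))
        + (∑ d ∈ S, tt E w b d + (tt E w b a + tt E w b b)) := by
    intro w
    unfold meas
    simp only [hsplit]
    rw [Finset.sum_add_distrib]
    ring
  rw [expand z', expand z]
  omega

private lemma sort_ex {n : ℕ} (E : Fin n → Fin n → Prop) [DecidableRel E]
    (hT : Transitive E) (hI : Irreflexive E) (lo hi : Fin n → ℤ)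
    (hlo : ∀ a b, E a b → lo a ≤ lo b) (hhi : ∀ a b, E a b → hi a ≤ hi b) :
    ∀ (N : ℕ) (z : Fin n → ℤ), meas E z ≤ N → Function.Injective z →
      (∀ j, z j ∈ Set.Icc (lo j) (hi j)) →
      ∃ x : Fin n → ℤ, Function.Injective x ∧
        (∀ j, x j ∈ Set.Icc (lo j) (hi j)) ∧ ∀ a b, E a b → x a < x b := by
  intro N
  induction N with
  | zero =>
    intro z hm hinj hdom
    refine ⟨z, hinj, hdom, fun a b hab => ?_⟩
    have hne : z a ≠ z b := by
      intro h
      have h' := hinj h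
      exact hI b (h' ▸ hab)
    rcases lt_or_ge (z a) (z b) with h | h
    · exact h
    · exfalso
      have hlt : z b < z a := lt_of_le_of_ne h (Ne.symm hne)
      have h1 : 1 ≤ tt E z a b := by
        simp only [tt, if_pos hab]
        omega
      have h2 : tt E z a b ≤ ∑ d, tt E z a d :=
        Finset.single_le_sum (fun _ _ => Nat.zero_le _) (Finset.mem_univ b)
      have h3 : (∑ d, tt E z a d) ≤ meas E z :=
        Finset.single_le_sum (f := fun c => ∑ d, tt E z c d)
          (fun _ _ => Nat.zero_le _) (Finset.mem_univ a)
      omega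
  | succ N ih =>
    intro z hm hinj hdom
    by_cases hviol : ∃ a b, E a b ∧ z b < z a
    · obtain ⟨a, b, hab, hltv⟩ := hviol
      have hdec := meas_swap_lt hT hI hab hltv
      refine ih (z ∘ Equiv.swap a b) (by omega)
        (hinj.comp (Equiv.swap a b).injective) ?_
      intro j
      by_cases hja : j = a
      · subst hja
        have e : (z ∘ Equiv.swap j b) j = z b := by simp
        rw [e]
        exact ⟨le_trans (hlo _ _ hab) (hdom b).1, le_trans (le_of_lt hltv) (hdom j).2⟩
      · by_cases hjb : j = b
        · subst hjb
          have e : (z ∘ Equiv.swap a j) j = z a := by simp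
          rw [e]
          exact ⟨le_trans (hdom j).1 (le_of_lt hltv), le_trans (hdom a).2 (hhi _ _ hab)⟩
        · have e : (z ∘ Equiv.swap a b) j = z j := by
            simp [Equiv.swap_apply_of_ne_of_ne hja hjb]
          rw [e]
          exact hdom j
    · push_neg at hviol
      refine ⟨z, hinj, hdom, fun a b hab => ?_⟩
      have hne : z a ≠ z b := by
        intro h
        have h' := hinj h
        exact hI b (h' ▸ hab)
      exact lt_of_le_of_ne (hviol a b hab) hne

/-- Lemma 2: assume `E` is transitive and irreflexive, all interval
domains are nonempty, the precedence constraints are bounds consistent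
(`mn a < mn b` and `mx a < mx b` along every edge), and `AllDifferent` is bounds
consistent (every bound of every variable has an `AllDifferent` support).  Let
`v ∈ {mn i, mx i}` and let `D'` be the domains obtained by direct pruning of
`X_i = v`.  Then `AllDiffPrec` has a solution with `x_i = v` iff there is an
injective assignment within the pruned domains `D'`. -/
theorem direct_pruning_support_iff
    (n : ℕ) (E : Fin n → Fin n → Prop)
    (hTrans : Transitive E) (hIrrefl : Irreflexive E)
    (mn mx : Fin n → ℤ)
    (hNonempty : ∀ j, mn j ≤ mx j)
    (hPrecBC : ∀ a b, E a b → mn a < mn b ∧ mx a < mx b)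
    (hADBC : ∀ j, ∀ b ∈ ({mn j, mx j} : Set ℤ),
      ∃ y : Fin n → ℤ, Function.Injective y ∧
        (∀ k, y k ∈ Set.Icc (mn k) (mx k)) ∧ y j = b)
    (i : Fin n) (v : ℤ) (hv : v = mn i ∨ v = mx i)
    (D' : Fin n → Set ℤ)
    (hD'i : D' i = {v})
    (hD'P : ∀ j, E j i → D' j = Set.Icc (mn j) (mx j) ∩ Set.Iic (v - 1))
    (hD'S : ∀ j, E i j → D' j = Set.Icc (mn j) (mx j) ∩ Set.Ici (v + 1))
    (hD'O : ∀ j, j ≠ i → ¬ E j i → ¬ E i j →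
      D' j = if v = mn j ∨ v = mx j then Set.Icc (mn j) (mx j) \ {v}
             else Set.Icc (mn j) (mx j)) :
    (∃ x : Fin n → ℤ, Function.Injective x ∧
       (∀ j, x j ∈ Set.Icc (mn j) (mx j)) ∧
       (∀ a b, E a b → x a < x b) ∧ x i = v) ↔
    (∃ z : Fin n → ℤ, Function.Injective z ∧ ∀ j, z j ∈ D' j) := by
  classical
  have hvlo : mn i ≤ v := by rcases hv with rfl | rfl; exacts [le_rfl, hNonempty i]
  have hvhi : v ≤ mx i := by rcases hv with rfl | rfl; exacts [hNonempty i, le_rfl]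
  constructor
  · rintro ⟨x, hinj, hdom, hprec, hxi⟩
    refine ⟨x, hinj, fun j => ?_⟩
    by_cases hji : j = i
    · subst hji
      rw [hD'i]
      exact Set.mem_singleton_iff.mpr hxi
    · by_cases hEji : E j i
      · rw [hD'P j hEji]
        have h := hprec j i hEji
        rw [hxi] at h
        exact ⟨hdom j, Set.mem_Iic.mpr (by omega)⟩
      · by_cases hEij : E i j
        · rw [hD'S j hEij]
          have h := hprec i j hEij
          rw [hxi] at h
          exact ⟨hdom j, Set.mem_Ici.mpr (by omega)⟩
        · rw [hD'O j hji hEji hEij]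
          split_ifs with hcond
          · refine ⟨hdom j, ?_⟩
            intro hmem
            rw [Set.mem_singleton_iff] at hmem
            exact hji (hinj (by rw [hmem, hxi]))
          · exact hdom j
  · rintro ⟨z, hzinj, hzdom⟩
    obtain ⟨lo, hlo_def⟩ : ∃ lo : Fin n → ℤ, ∀ j,
        lo j = if j = i then v else if E i j then max (mn j) (v + 1) else mn j :=
      ⟨_, fun j => rfl⟩
    obtain ⟨hi, hhi_def⟩ : ∃ hi : Fin n → ℤ, ∀ j,
        hi j = if j = i then v else if E j i then min (mx j) (v - 1) else mx j :=
      ⟨_, fun j => rfl⟩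
    have hlo_i : lo i = v := by rw [hlo_def]; simp
    have hhi_i : hi i = v := by rw [hhi_def]; simp
    have hne_i : ∀ j, E i j → j ≠ i := fun j h hj => hIrrefl i (hj ▸ h)
    have hne_i' : ∀ j, E j i → j ≠ i := fun j h hj => hIrrefl i (hj ▸ h)
    have hlo_S : ∀ j, E i j → lo j = max (mn j) (v + 1) := by
      intro j h
      rw [hlo_def, if_neg (hne_i j h), if_pos h]
    have hlo_O : ∀ j, j ≠ i → ¬ E i j → lo j = mn j := by
      intro j h1 h2
      rw [hlo_def, if_neg h1, if_neg h2]
    have hhi_P : ∀ j, E j i → hi j = min (mx j) (v - 1) := by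
      intro j h
      rw [hhi_def, if_neg (hne_i' j h), if_pos h]
    have hhi_O : ∀ j, j ≠ i → ¬ E j i → hi j = mx j := by
      intro j h1 h2
      rw [hhi_def, if_neg h1, if_neg h2]
    -- lo is monotone along edges
    have hlo_mono : ∀ a b, E a b → lo a ≤ lo b := by
      intro a b hab
      by_cases hbi : b = i
      · rw [hbi] at hab
        have hai : a ≠ i := fun h => hIrrefl i (h ▸ hab)
        have hEia : ¬ E i a := fun h => hIrrefl i (hTrans h hab)
        rw [hbi, hlo_O a hai hEia, hlo_i]
        have := (hPrecBC a i hab).1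
        omega
      · by_cases hai : a = i
        · rw [hai] at hab
          rw [hai, hlo_i, hlo_S b hab]
          have := le_max_right (mn b) (v + 1)
          omega
        · have hmn := (hPrecBC a b hab).1
          by_cases hEia : E i a
          · have hEib : E i b := hTrans hEia hab
            rw [hlo_S a hEia, hlo_S b hEib]
            omega
          · rw [hlo_O a hai hEia, hlo_def b, if_neg hbi]
            split_ifs <;> omega
    have hhi_mono : ∀ a b, E a b → hi a ≤ hi b := by
      intro a b hab
      by_cases hai : a = i
      · rw [hai] at hab
        have hbi : b ≠ i := fun h => hIrrefl i (h ▸ hab)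
        have hEbi : ¬ E b i := fun h => hIrrefl i (hTrans hab h)
        rw [hai, hhi_i, hhi_O b hbi hEbi]
        have := (hPrecBC i b hab).2
        omega
      · by_cases hbi : b = i
        · rw [hbi] at hab
          rw [hbi, hhi_P a hab, hhi_i]
          have := min_le_right (mx a) (v - 1)
          omega
        · have hmx := (hPrecBC a b hab).2
          by_cases hEbi : E b i
          · have hEai : E a i := hTrans hab hEbi
            rw [hhi_P a hEai, hhi_P b hEbi]
            omega
          · rw [hhi_O b hbi hEbi, hhi_def a, if_neg hai]
            split_ifs <;> omega
    have hzi : z i = v := by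
      have h := hzdom i
      rw [hD'i] at h
      exact h
    have hzIcc : ∀ j, z j ∈ Set.Icc (lo j) (hi j) := by
      intro j
      by_cases hji : j = i
      · subst hji
        rw [hlo_i, hhi_i]
        exact ⟨le_of_eq hzi.symm, le_of_eq hzi⟩
      · by_cases hEji : E j i
        · have hEij : ¬ E i j := fun h => hIrrefl i (hTrans h hEji)
          have h := hzdom j
          rw [hD'P j hEji] at h
          obtain ⟨h1, h2⟩ := h
          rw [hlo_O j hji hEij, hhi_P j hEji]
          rw [Set.mem_Iic] at h2
          exact ⟨h1.1, le_min h1.2 h2⟩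
        · by_cases hEij : E i j
          · have h := hzdom j
            rw [hD'S j hEij] at h
            obtain ⟨h1, h2⟩ := h
            rw [hlo_S j hEij, hhi_O j hji hEji]
            rw [Set.mem_Ici] at h2
            exact ⟨max_le h1.1 h2, h1.2⟩
          · have h := hzdom j
            rw [hD'O j hji hEji hEij] at h
            rw [hlo_O j hji hEij, hhi_O j hji hEji]
            split_ifs at h with hcond
            · exact h.1
            · exact h
    obtain ⟨x, hxinj, hxdom, hxprec⟩ :=
      sort_ex E hTrans hIrrefl lo hi hlo_mono hhi_mono (meas E z) z le_rfl hzinj hzIcc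
    have hxi : x i = v := by
      have h := hxdom i
      rw [hlo_i, hhi_i] at h
      exact le_antisymm h.2 h.1
    refine ⟨x, hxinj, fun j => ?_, hxprec, hxi⟩
    have h := hxdom j
    have hlo_ge : mn j ≤ lo j := by
      rw [hlo_def]
      split_ifs with h1 h2
      · subst h1; omega
      · exact le_max_left _ _
      · exact le_rfl
    have hhi_le : hi j ≤ mx j := by
      rw [hhi_def]
      split_ifs with h1 h2
      · subst h1; omega
      · exact min_le_left _ _
      · exact le_rfl
    exact ⟨le_trans hlo_ge h.1, le_trans h.2 hhi_le⟩
end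

section
/- Let E be a transitive and irreflexive relation on {1,…,n} and let the variables have nonempty integer interval domains with min_a < min_b and max_a < max_b for every (a,b) ∈ E (bounds consistent precedences). Let i be an index and v ∈ {min_i, max_i}, and let D' be the domains obtained by direct pruning of X_i = v. Then every D'(X_j) with j ∈ P(i) ∪ S(i) ∪ {i} is a nonempty interval, every other D'(X_j) is an interval, and for every edge (a,b) ∈ E such that D'(X_a) and D'(X_b) are nonempty, the pruned domains remain preprocessed: min D'(X_a) ≤ min D'(X_b) and max D'(X_a) ≤ max D'(X_b). -/
/-- with bounds consistent precedences (`mn a < mn b` and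
`mx a < mx b` along every edge of the transitive irreflexive relation `E`),
direct pruning of `X_i = v` (for `v ∈ {mn i, mx i}`) preserves the interval
structure of the domains: the pruned domain of `i`, of every predecessor and of
every successor is a nonempty interval, every other pruned domain is an
interval, and along every edge whose two endpoint domains are nonempty the
pruned domains remain preprocessed (`min ≤ min` and `max ≤ max`). -/
theorem direct_pruning_preserves_preprocessing
    (n : ℕ) (E : Fin n → Fin n → Prop)
    (hTrans : Transitive E) (hIrrefl : Irreflexive E)
    (mn mx : Fin n → ℤ)
    (hNonempty : ∀ j, mn j ≤ mx j)
    (hPrecBC : ∀ a b, E a b → mn a < mn b ∧ mx a < mx b)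
    (i : Fin n) (v : ℤ) (hv : v = mn i ∨ v = mx i)
    (D' : Fin n → Set ℤ)
    (hD'i : D' i = {v})
    (hD'P : ∀ j, E j i → D' j = Set.Icc (mn j) (mx j) ∩ Set.Iic (v - 1))
    (hD'S : ∀ j, E i j → D' j = Set.Icc (mn j) (mx j) ∩ Set.Ici (v + 1))
    (hD'O : ∀ j, j ≠ i → ¬ E j i → ¬ E i j →
      D' j = if v = mn j ∨ v = mx j then Set.Icc (mn j) (mx j) \ {v}
             else Set.Icc (mn j) (mx j)) :
    (∀ j, (E j i ∨ E i j ∨ j = i) → ∃ a b : ℤ, a ≤ b ∧ D' j = Set.Icc a b) ∧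
    (∀ j, ∃ a b : ℤ, D' j = Set.Icc a b) ∧
    (∀ a b, E a b → ∀ la ua lb ub : ℤ, la ≤ ua → lb ≤ ub →
      D' a = Set.Icc la ua → D' b = Set.Icc lb ub → la ≤ lb ∧ ua ≤ ub) := by
  obtain ⟨hvl, hvr⟩ : mn i ≤ v ∧ v ≤ mx i := by
    rcases hv with h | h <;> subst h
    · exact ⟨le_rfl, hNonempty i⟩
    · exact ⟨hNonempty i, le_rfl⟩
  -- characterization of each pruned domain as an interval with case tags
  have key : ∀ j, ∃ lj hj : ℤ, D' j = Set.Icc lj hj ∧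
      ((j = i ∧ lj = v ∧ hj = v) ∨
       (E j i ∧ lj = mn j ∧ hj = min (mx j) (v - 1)) ∨
       (E i j ∧ lj = max (mn j) (v + 1) ∧ hj = mx j) ∨
       (j ≠ i ∧ ¬ E j i ∧ ¬ E i j ∧ mn j ≤ lj ∧ lj ≤ mn j + 1 ∧
         mx j - 1 ≤ hj ∧ hj ≤ mx j)) := by
    intro j
    by_cases h1 : j = i
    · subst h1
      exact ⟨v, v, by rw [hD'i, Set.Icc_self], Or.inl ⟨rfl, rfl, rfl⟩⟩
    · by_cases h2 : E j i
      · refine ⟨mn j, min (mx j) (v - 1), ?_, Or.inr (Or.inl ⟨h2, rfl, rfl⟩)⟩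
        rw [hD'P j h2]; ext x; simp only [Set.mem_inter_iff, Set.mem_Icc, Set.mem_Iic]; omega
      · by_cases h3 : E i j
        · refine ⟨max (mn j) (v + 1), mx j, ?_, Or.inr (Or.inr (Or.inl ⟨h3, rfl, rfl⟩))⟩
          rw [hD'S j h3]; ext x; simp only [Set.mem_inter_iff, Set.mem_Icc, Set.mem_Ici]; omega
        · by_cases h4 : v = mn j
          · refine ⟨mn j + 1, mx j, ?_,
              Or.inr (Or.inr (Or.inr ⟨h1, h2, h3, by omega, le_rfl, by omega, le_rfl⟩))⟩
            rw [hD'O j h1 h2 h3, if_pos (Or.inl h4)]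
            ext x
            simp only [Set.mem_diff, Set.mem_Icc, Set.mem_singleton_iff]
            omega
          · by_cases h5 : v = mx j
            · refine ⟨mn j, mx j - 1, ?_,
                Or.inr (Or.inr (Or.inr ⟨h1, h2, h3, le_rfl, by omega, le_rfl, by omega⟩))⟩
              rw [hD'O j h1 h2 h3, if_pos (Or.inr h5)]
              ext x
              simp only [Set.mem_diff, Set.mem_Icc, Set.mem_singleton_iff]
              omega
            · refine ⟨mn j, mx j, ?_,
                Or.inr (Or.inr (Or.inr ⟨h1, h2, h3, le_rfl, by omega, by omega, le_rfl⟩))⟩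
              rw [hD'O j h1 h2 h3, if_neg (by tauto)]
  refine ⟨?_, ?_, ?_⟩
  · -- nonempty intervals for i, predecessors, successors
    intro j hj
    obtain ⟨lj, hj', hD, hcase⟩ := key j
    refine ⟨lj, hj', ?_, hD⟩
    rcases hcase with ⟨_, h, h'⟩ | ⟨he, h, h'⟩ | ⟨he, h, h'⟩ | ⟨hne, hn1, hn2, _⟩
    · omega
    · have := hPrecBC j i he; have := hNonempty j; omega
    · have := hPrecBC i j he; have := hNonempty j; omega
    · rcases hj with h | h | h <;> tauto
  · -- all domains are intervals
    intro j
    obtain ⟨lj, hj', hD, _⟩ := key j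
    exact ⟨lj, hj', hD⟩
  · -- preprocessing is preserved
    intro a b hab la ua lb ub hla hlb hDa hDb
    obtain ⟨l1, h1, hD1, hc1⟩ := key a
    obtain ⟨l2, h2, hD2, hc2⟩ := key b
    have hEa : Set.Icc la ua = Set.Icc l1 h1 := by rw [← hDa, hD1]
    have hEb : Set.Icc lb ub = Set.Icc l2 h2 := by rw [← hDb, hD2]
    have ea : la = l1 ∧ ua = h1 := by
      have hm1 : l1 ≤ h1 := Set.nonempty_Icc.mp (hEa ▸ Set.nonempty_Icc.mpr hla)
      have hx : la ∈ Set.Icc l1 h1 := hEa ▸ Set.left_mem_Icc.mpr hla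
      have hx' : ua ∈ Set.Icc l1 h1 := hEa ▸ Set.right_mem_Icc.mpr hla
      have hy : l1 ∈ Set.Icc la ua := hEa.symm ▸ Set.left_mem_Icc.mpr hm1
      have hy' : h1 ∈ Set.Icc la ua := hEa.symm ▸ Set.right_mem_Icc.mpr hm1
      simp only [Set.mem_Icc] at hx hx' hy hy'
      omega
    have eb : lb = l2 ∧ ub = h2 := by
      have hm2 : l2 ≤ h2 := Set.nonempty_Icc.mp (hEb ▸ Set.nonempty_Icc.mpr hlb)
      have hx : lb ∈ Set.Icc l2 h2 := hEb ▸ Set.left_mem_Icc.mpr hlb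
      have hx' : ub ∈ Set.Icc l2 h2 := hEb ▸ Set.right_mem_Icc.mpr hlb
      have hy : l2 ∈ Set.Icc lb ub := hEb.symm ▸ Set.left_mem_Icc.mpr hm2
      have hy' : h2 ∈ Set.Icc lb ub := hEb.symm ▸ Set.right_mem_Icc.mpr hm2
      simp only [Set.mem_Icc] at hx hx' hy hy'
      omega
    obtain ⟨rfl, rfl⟩ := ea
    obtain ⟨rfl, rfl⟩ := eb
    obtain ⟨hBC1, hBC2⟩ := hPrecBC a b hab
    rcases hc1 with ⟨C1, C1l, C1h⟩ | ⟨C1, C1l, C1h⟩ | ⟨C1, C1l, C1h⟩ |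
        ⟨C1, C1', C1'', C1a, C1b, C1c, C1d⟩ <;>
      rcases hc2 with ⟨C2, C2l, C2h⟩ | ⟨C2, C2l, C2h⟩ | ⟨C2, C2l, C2h⟩ |
        ⟨C2, C2', C2'', C2a, C2b, C2c, C2d⟩
    · exact absurd (by rw [C1, C2] at hab; exact hab) (hIrrefl i)
    · exact absurd (hTrans (by rwa [C1] at hab) C2) (hIrrefl i)
    · subst C1; omega
    · exact absurd (by rwa [C1] at hab) C2''
    · subst C2; omega
    · omega
    · omega
    · omega
    · exact absurd (hTrans C1 (by rwa [C2] at hab)) (hIrrefl i)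
    · exact absurd (hTrans C1 (hTrans hab C2)) (hIrrefl i)
    · omega
    · exact absurd (hTrans C1 hab) C2''
    · exact absurd (by rwa [C2] at hab) C1'
    · exact absurd (hTrans hab C2) C1'
    · omega
    · omega
end

section
/- Let x be a solution of AllDiffPrec([X_1,…,X_n], E) with x_i = v for some index i. Then for every integer u ≥ v, the counting condition on successor-side intervals holds: |{j ∈ S(i) : max_j ≤ u}| + |{j ∉ S(i), j ≠ i : v ≤ min_j and max_j ≤ u}| ≤ u − v. (These are the conditions B^i_{1,u} + D^i_{v,u} ≤ u − v; in particular, if some such interval [v,u] violates the condition, then the value v has no bound support for X_i and can be pruned.) -/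
/-- if `x` is a solution of `AllDiffPrec` with `x i = v`, then for
every `u ≥ v` the successor-side counting condition
`B^i_{1,u} + D^i_{v,u} ≤ u − v` holds, where `S` is the set of successors of `i`
(the indices reachable from `i` via edges of `E`),
`B^i_{1,u} = |{j ∈ S(i) : mx j ≤ u}|` and
`D^i_{v,u} = |{j ∉ S(i), j ≠ i : v ≤ mn j ∧ mx j ≤ u}|`. -/
theorem successor_counting_condition_of_solution
    (n : ℕ) (E : Fin n → Fin n → Prop)
    (mn mx : Fin n → ℤ)
    (i : Fin n) (S : Finset (Fin n))
    (hS : ∀ j, j ∈ S ↔ Relation.TransGen E i j)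
    (x : Fin n → ℤ)
    (hDom : ∀ j, x j ∈ Set.Icc (mn j) (mx j))
    (hInj : Function.Injective x)
    (hPrec : ∀ a b, E a b → x a < x b)
    (v : ℤ) (hxi : x i = v)
    (u : ℤ) (huv : v ≤ u) :
    ((S.filter (fun j => mx j ≤ u)).card : ℤ) +
      ((Finset.univ.filter
        (fun j => j ∉ S ∧ j ≠ i ∧ v ≤ mn j ∧ mx j ≤ u)).card : ℤ)
      ≤ u - v := by
  classical
  set A := S.filter (fun j => mx j ≤ u) with hA
  set B := Finset.univ.filter
      (fun j => j ∉ S ∧ j ≠ i ∧ v ≤ mn j ∧ mx j ≤ u) with hB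
  have hdisj : Disjoint A B := by
    rw [Finset.disjoint_left]
    intro a ha hb
    simp only [hA, hB, Finset.mem_filter] at ha hb
    exact hb.2.1 ha.1
  have hsucc : ∀ j, Relation.TransGen E i j → x i < x j := by
    intro j h
    induction h with
    | single h => exact hPrec _ _ h
    | tail _ h ih => exact ih.trans (hPrec _ _ h)
  have hmap : ∀ j ∈ A ∪ B, x j ∈ Finset.Icc (v + 1) u := by
    intro j hj
    rcases Finset.mem_union.1 hj with hj | hj
    · simp only [hA, Finset.mem_filter] at hj
      have h1 : v < x j := hxi ▸ hsucc j ((hS j).1 hj.1)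
      exact Finset.mem_Icc.2 ⟨by omega, ((hDom j).2.trans hj.2)⟩
    · simp only [hB, Finset.mem_filter] at hj
      obtain ⟨_, _, hji, hvm, hmu⟩ := hj
      have h1 : v ≤ x j := hvm.trans (hDom j).1
      have h2 : x j ≠ v := fun h => hji (hInj (h.trans hxi.symm))
      exact Finset.mem_Icc.2 ⟨by omega, (hDom j).2.trans hmu⟩
  have hcard : (A ∪ B).card ≤ (Finset.Icc (v + 1) u).card :=
    Finset.card_le_card_of_injOn x hmap (fun a _ b _ h => hInj h)
  rw [Finset.card_union_of_disjoint hdisj] at hcard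
  have : (Finset.Icc (v + 1) u).card = (u - v).toNat := by
    rw [Int.card_Icc]; congr 1; omega
  rw [this] at hcard
  have := Int.toNat_of_nonneg (by omega : (0:ℤ) ≤ u - v)
  omega
end

section
/- Let x be a solution of AllDiffPrec([X_1,…,X_n], E) with x_i = v for some index i. Then for every integer l ≤ v, the counting condition on predecessor-side intervals holds: |{j ∈ P(i) : min_j ≥ l}| + |{j ∉ P(i), j ≠ i : l ≤ min_j and max_j ≤ v}| ≤ v − l. (These are the conditions B^i_{l,d} + D^i_{l,v} ≤ v − l, where d is an upper bound on all domains; in particular, if some such interval [l,v] violates the condition, then the value v has no bound support for X_i and can be pruned.) -/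
/-- if `x` is a solution of `AllDiffPrec` with `x i = v`, then for
every `l ≤ v` the predecessor-side counting condition
`B^i_{l,d} + D^i_{l,v} ≤ v − l` holds, where `P` is the set of predecessors of
`i` (the indices from which `i` is reachable via edges of `E`),
`B^i_{l,d} = |{j ∈ P(i) : mn j ≥ l}|` and
`D^i_{l,v} = |{j ∉ P(i), j ≠ i : l ≤ mn j ∧ mx j ≤ v}|`. -/
theorem predecessor_counting_condition_of_solution
    (n : ℕ) (E : Fin n → Fin n → Prop)
    (mn mx : Fin n → ℤ)
    (i : Fin n) (P : Finset (Fin n))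
    (hP : ∀ j, j ∈ P ↔ Relation.TransGen E j i)
    (x : Fin n → ℤ)
    (hDom : ∀ j, x j ∈ Set.Icc (mn j) (mx j))
    (hInj : Function.Injective x)
    (hPrec : ∀ a b, E a b → x a < x b)
    (v : ℤ) (hxi : x i = v)
    (l : ℤ) (hlv : l ≤ v) :
    ((P.filter (fun j => l ≤ mn j)).card : ℤ) +
      ((Finset.univ.filter
        (fun j => j ∉ P ∧ j ≠ i ∧ l ≤ mn j ∧ mx j ≤ v)).card : ℤ)
      ≤ v - l := by
  have hTG : ∀ a b, Relation.TransGen E a b → x a < x b := by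
    intro a b h
    induction h with
    | single h => exact hPrec _ _ h
    | tail _ h ih => exact ih.trans (hPrec _ _ h)
  set A := P.filter (fun j => l ≤ mn j) with hA
  set B := Finset.univ.filter
      (fun j => j ∉ P ∧ j ≠ i ∧ l ≤ mn j ∧ mx j ≤ v) with hB
  have hdisj : Disjoint A B := by
    rw [Finset.disjoint_left]
    intro j hj hj'
    rw [hA, Finset.mem_filter] at hj
    rw [hB, Finset.mem_filter] at hj'
    exact hj'.2.1 hj.1
  have hsub : (A ∪ B).card ≤ (Finset.Icc l (v - 1)).card := by
    apply Finset.card_le_card_of_injOn x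
    · intro j hj
      rw [Finset.mem_coe, Finset.mem_union] at hj
      rw [Finset.mem_coe, Finset.mem_Icc]
      rcases hj with hj | hj
      · rw [hA, Finset.mem_filter] at hj
        have h1 := (hDom j).1
        have h2 : x j < v := by
          rw [← hxi]; exact hTG _ _ ((hP j).1 hj.1)
        exact ⟨le_trans hj.2 h1, by omega⟩
      · rw [hB, Finset.mem_filter] at hj
        obtain ⟨-, -, hji, hl, hv⟩ := hj
        have h1 := (hDom j).1
        have h2 := (hDom j).2
        have hne : x j ≠ v := by
          intro h; exact hji (hInj (h.trans hxi.symm))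
        constructor <;> omega
    · exact fun a _ b _ h => hInj h
  have hcard : (Finset.Icc l (v - 1)).card = (v - l).toNat := by
    rw [Int.card_Icc]; congr 1; omega
  have := Finset.card_union_of_disjoint hdisj
  rw [this, hcard] at hsub
  have : ((A.card + B.card : ℕ) : ℤ) ≤ ((v - l).toNat : ℤ) := by exact_mod_cast hsub
  push_cast at this
  omega
end

section
/- Let E be a transitive and irreflexive relation on {1,…,n}, let all variables have nonempty integer interval domains contained in [1,d], and suppose: (i) the precedence constraints are bounds consistent, i.e., min_a < min_b and max_a < max_b for every (a,b) ∈ E; (ii) the AllDifferent constraint is bounds consistent, i.e., for every j and every b ∈ {min_j, max_j} there is an injective assignment y with y_k ∈ D(X_k) for all k and y_j = b; and (iii) for every index i, every v ∈ D(X_i), every integer u with max_i + 1 ≤ u ≤ d it holds that |{j ∈ S(i) : max_j ≤ u}| + |{j ∉ S(i), j ≠ i : v ≤ min_j and max_j ≤ u}| ≤ u − v, and every integer l with 1 ≤ l ≤ min_i − 1 it holds that |{j ∈ P(i) : min_j ≥ l}| + |{j ∉ P(i), j ≠ i : l ≤ min_j and max_j ≤ v}| ≤ v − l. Then AllDiffPrec([X_1,…,X_n],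 E) is bounds consistent: for every index i and every b ∈ {min_i, max_i} there exists a solution of AllDiffPrec with x_i = b. -/
open Finset

lemma exists_min_rel {n : ℕ} (E : Fin n → Fin n → Prop) [DecidableRel E]
    (hT : Transitive E) (hI : Irreflexive E) (T : Finset (Fin n)) (hne : T.Nonempty) :
    ∃ j ∈ T, ∀ p ∈ T, ¬ E p j := by
  obtain ⟨j, hjT, hjmin⟩ := T.exists_min_image (fun j => (T.filter (fun p => E p j)).card) hne
  refine ⟨j, hjT, fun p hp hEp => ?_⟩
  have hsub : T.filter (fun q => E q p) ⊂ T.filter (fun q => E q j) := by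
    constructor
    · intro q hq
      simp only [mem_filter] at hq ⊢
      exact ⟨hq.1, hT hq.2 hEp⟩
    · intro hsub'
      have hp' : p ∈ T.filter (fun q => E q j) := by
        simp only [mem_filter]; exact ⟨hp, hEp⟩
      have := hsub' hp'
      simp only [mem_filter] at this
      exact hI p this.2
  have h1 := Finset.card_lt_card hsub
  have h2 := hjmin p hp
  omega

/-- Greedy matching for interval domains with Hall condition, producing a
solution that respects a precedence relation compatible with the bounds. -/
lemma greedy {n : ℕ} (E : Fin n → Fin n → Prop) [DecidableRel E]
    (hT : Transitive E) (hI : Irreflexive E) :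
    ∀ (k : ℕ) (S : Finset (Fin n)) (a b : Fin n → ℤ), S.card = k →
    (∀ j ∈ S, a j ≤ b j) →
    (∀ p ∈ S, ∀ q ∈ S, E p q → a p ≤ a q ∧ b p ≤ b q) →
    (∀ l u : ℤ, l ≤ u → ((S.filter fun j => l ≤ a j ∧ b j ≤ u).card : ℤ) ≤ u - l + 1) →
    ∃ f : Fin n → ℤ, Set.InjOn f ↑S ∧ (∀ j ∈ S, a j ≤ f j ∧ f j ≤ b j) ∧
      ∀ p ∈ S, ∀ q ∈ S, E p q → f p < f q := by
  intro k
  induction k with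
  | zero =>
    intro S a b hcard _ _ _
    have hS : S = ∅ := Finset.card_eq_zero.mp hcard
    subst hS
    exact ⟨a, by simp [Set.InjOn], by simp, by simp⟩
  | succ k ih =>
    intro S a b hcard hne hmono hHall
    have hSne : S.Nonempty := Finset.card_pos.mp (by omega)
    -- minimum of a over S
    obtain ⟨j1, hj1S, hj1min⟩ := S.exists_min_image a hSne
    set vmin := a j1 with hvmin
    have hamin : ∀ j ∈ S, vmin ≤ a j := hj1min
    set T : Finset (Fin n) := S.filter (fun j => a j = vmin) with hT'
    have hj1T : j1 ∈ T := by simp [hT', hj1S, hvmin]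
    obtain ⟨j2, hj2T, hj2min⟩ := T.exists_min_image b ⟨j1, hj1T⟩
    set m := b j2 with hm
    set T' : Finset (Fin n) := T.filter (fun j => b j = m) with hT''
    have hj2T' : j2 ∈ T' := by simp [hT'', hj2T, hm]
    obtain ⟨j0, hj0T', hj0min⟩ := exists_min_rel E hT hI T' ⟨j2, hj2T'⟩
    have hj0T : j0 ∈ T := (mem_filter.mp hj0T').1
    have hj0S : j0 ∈ S := (mem_filter.mp hj0T).1
    have haj0 : a j0 = vmin := (mem_filter.mp hj0T).2
    have hbj0 : b j0 = m := (mem_filter.mp hj0T').2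
    have hmmin : ∀ j ∈ T, m ≤ b j := hj2min
    -- j0 is E-minimal in S
    have hj0Emin : ∀ p ∈ S, ¬ E p j0 := by
      intro p hpS hEp
      have hpq := hmono p hpS j0 hj0S hEp
      have hpT : p ∈ T := by
        simp only [hT', mem_filter]
        exact ⟨hpS, le_antisymm (le_trans hpq.1 (le_of_eq haj0)) (hamin p hpS)⟩
      have hpT' : p ∈ T' := by
        simp only [hT'', mem_filter]
        exact ⟨hpT, le_antisymm (le_trans hpq.2 (le_of_eq hbj0)) (hmmin p hpT)⟩
      exact hj0min p hpT' hEp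
    set S' := S.erase j0 with hS'
    have hcard' : S'.card = k := by
      rw [hS', Finset.card_erase_of_mem hj0S, hcard]
      omega
    set a' : Fin n → ℤ := fun j => max (a j) (vmin + 1) with ha'
    -- nonemptiness for S'
    have hne' : ∀ j ∈ S', a' j ≤ b j := by
      intro j hj
      have hjS : j ∈ S := Finset.mem_of_mem_erase hj
      have hjne : j ≠ j0 := Finset.ne_of_mem_erase hj
      have h1 : a j ≤ b j := hne j hjS
      have h2 : vmin + 1 ≤ b j := by
        by_contra hcon
        push_neg at hcon
        have hbj : b j = vmin := le_antisymm (by omega) (le_trans (hamin j hjS) h1)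
        have haj : a j = vmin := le_antisymm (by omega) (hamin j hjS)
        have hjT : j ∈ T := by simp [hT', hjS, haj]
        have hmv : m ≤ vmin := le_trans (hmmin j hjT) (le_of_eq hbj)
        have hbj0v : b j0 = vmin := le_antisymm (hbj0 ▸ hmv) (haj0 ▸ hne j0 hj0S)
        -- Hall at [vmin, vmin] violated by {j, j0}
        have hsub : ({j, j0} : Finset (Fin n)) ⊆ S.filter (fun p => vmin ≤ a p ∧ b p ≤ vmin) := by
          intro x hx
          simp only [mem_insert, mem_singleton] at hx
          rcases hx with rfl | rfl
          · simp only [mem_filter]; exact ⟨hjS, le_of_eq haj.symm, le_of_eq hbj⟩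
          · simp only [mem_filter]; exact ⟨hj0S, le_of_eq haj0.symm, le_of_eq hbj0v⟩
        have hc2 : ({j, j0} : Finset (Fin n)).card = 2 := by
          rw [Finset.card_insert_of_notMem (by simp [hjne]), Finset.card_singleton]
        have := hHall vmin vmin le_rfl
        have hle := Finset.card_le_card hsub
        rw [hc2] at hle
        have : ((S.filter (fun p => vmin ≤ a p ∧ b p ≤ vmin)).card : ℤ) ≥ 2 := by exact_mod_cast hle
        omega
      exact max_le h1 h2
    have hmono' : ∀ p ∈ S', ∀ q ∈ S', E p q → a' p ≤ a' q ∧ b p ≤ b q := by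
      intro p hp q hq hE
      have h := hmono p (Finset.mem_of_mem_erase hp) q (Finset.mem_of_mem_erase hq) hE
      exact ⟨max_le_max h.1 le_rfl, h.2⟩
    -- Hall for S'
    have hHall' : ∀ l u : ℤ, l ≤ u →
        ((S'.filter fun j => l ≤ a' j ∧ b j ≤ u).card : ℤ) ≤ u - l + 1 := by
      intro l u hlu
      by_cases hl2 : l ≤ vmin + 1
      · -- the a'-condition is trivially true
        have heq : S'.filter (fun j => l ≤ a' j ∧ b j ≤ u) = S'.filter (fun j => b j ≤ u) := by
          apply Finset.filter_congr
          intro j hj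
          have : l ≤ a' j := le_trans hl2 (le_max_right _ _)
          simp [this]
        rw [heq]
        by_cases hbu : b j0 ≤ u
        · have hsub : insert j0 (S'.filter (fun j => b j ≤ u)) ⊆
              S.filter (fun j => vmin ≤ a j ∧ b j ≤ u) := by
            intro x hx
            rcases Finset.mem_insert.mp hx with rfl | hx'
            · simp only [mem_filter]; exact ⟨hj0S, le_of_eq haj0.symm, hbu⟩
            · have hxS' := (mem_filter.mp hx')
              simp only [mem_filter]
              exact ⟨Finset.mem_of_mem_erase hxS'.1, hamin _ (Finset.mem_of_mem_erase hxS'.1), hxS'.2⟩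
          have hnotmem : j0 ∉ S'.filter (fun j => b j ≤ u) := by
            simp [hS']
          have hvu : vmin ≤ u := le_trans (haj0 ▸ hne j0 hj0S) hbu
          have hH := hHall vmin u hvu
          have hle := Finset.card_le_card hsub
          rw [Finset.card_insert_of_notMem hnotmem] at hle
          have : ((S'.filter (fun j => b j ≤ u)).card : ℤ) + 1 ≤ u - vmin + 1 := by
            have : (((S'.filter (fun j => b j ≤ u)).card + 1 : ℕ) : ℤ) ≤
                ((S.filter (fun j => vmin ≤ a j ∧ b j ≤ u)).card : ℤ) := by exact_mod_cast hle
            push_cast at this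
            omega
          omega
        · -- b j0 > u : every counted j has a j ≥ vmin + 1
          push_neg at hbu
          have hsub : S'.filter (fun j => b j ≤ u) ⊆
              S.filter (fun j => vmin + 1 ≤ a j ∧ b j ≤ u) := by
            intro x hx
            have hx' := mem_filter.mp hx
            have hxS : x ∈ S := Finset.mem_of_mem_erase hx'.1
            simp only [mem_filter]
            refine ⟨hxS, ?_, hx'.2⟩
            by_contra hcon
            push_neg at hcon
            have hax : a x = vmin := le_antisymm (by omega) (hamin x hxS)
            have hxT : x ∈ T := by simp [hT', hxS, hax]
            have := hmmin x hxT
            rw [← hbj0] at this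
            omega
          have hle := Finset.card_le_card hsub
          by_cases hvu : vmin + 1 ≤ u
          · have hH := hHall (vmin + 1) u hvu
            have : ((S'.filter (fun j => b j ≤ u)).card : ℤ) ≤
                ((S.filter (fun j => vmin + 1 ≤ a j ∧ b j ≤ u)).card : ℤ) := by exact_mod_cast hle
            omega
          · -- u ≤ vmin : the filter is empty
            push_neg at hvu
            have hempty : S'.filter (fun j => b j ≤ u) = ∅ := by
              rw [Finset.filter_eq_empty_iff]
              intro x hx
              have hxS : x ∈ S := Finset.mem_of_mem_erase hx
              have := hamin x hxS
              have := hne x hxS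
              -- if b x ≤ u then a x ≤ u < vmin + 1, so a x = vmin, x ∈ T, m ≤ b x ≤ u < b j0 = m
              intro hbx
              have hax : a x = vmin := le_antisymm (by omega) (hamin x hxS)
              have hxT : x ∈ T := by simp [hT', hxS, hax]
              have := hmmin x hxT
              rw [← hbj0] at this
              omega
            rw [hempty]
            simp
            omega
      · -- l ≥ vmin + 2
        push_neg at hl2
        have hsub : S'.filter (fun j => l ≤ a' j ∧ b j ≤ u) ⊆
            S.filter (fun j => l ≤ a j ∧ b j ≤ u) := by
          intro x hx
          have hx' := mem_filter.mp hx
          have hxS : x ∈ S := Finset.mem_of_mem_erase hx'.1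
          simp only [mem_filter]
          refine ⟨hxS, ?_, hx'.2.2⟩
          have h : l ≤ max (a x) (vmin + 1) := hx'.2.1
          rcases le_max_iff.mp h with h' | h'
          · exact h'
          · omega
        have hle := Finset.card_le_card hsub
        have hH := hHall l u hlu
        have : ((S'.filter (fun j => l ≤ a' j ∧ b j ≤ u)).card : ℤ) ≤
            ((S.filter (fun j => l ≤ a j ∧ b j ≤ u)).card : ℤ) := by exact_mod_cast hle
        omega
    obtain ⟨f', hinj', hdom', hprec'⟩ := ih S' a' b hcard' hne' hmono' hHall'
    set f : Fin n → ℤ := Function.update f' j0 vmin with hf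
    have hfj0 : f j0 = vmin := Function.update_self _ _ _
    have hfS' : ∀ j ∈ S', f j = f' j := by
      intro j hj
      exact Function.update_of_ne (Finset.ne_of_mem_erase hj) _ _
    have hfgt : ∀ j ∈ S', vmin < f j := by
      intro j hj
      rw [hfS' j hj]
      have h1 : vmin + 1 ≤ a' j := le_max_right _ _
      have h2 := (hdom' j hj).1
      omega
    refine ⟨f, ?_, ?_, ?_⟩
    · intro p hp q hq hfpq
      simp only [Finset.coe_sort_coe, Finset.mem_coe] at hp hq
      by_cases hpj0 : p = j0
      · by_cases hqj0 : q = j0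
        · rw [hpj0, hqj0]
        · exfalso
          have hq' : q ∈ S' := Finset.mem_erase.mpr ⟨hqj0, hq⟩
          have := hfgt q hq'
          rw [hpj0, hfj0] at hfpq
          omega
      · by_cases hqj0 : q = j0
        · exfalso
          have hp' : p ∈ S' := Finset.mem_erase.mpr ⟨hpj0, hp⟩
          have := hfgt p hp'
          rw [hqj0, hfj0] at hfpq
          omega
        · have hp' : p ∈ S' := Finset.mem_erase.mpr ⟨hpj0, hp⟩
          have hq' : q ∈ S' := Finset.mem_erase.mpr ⟨hqj0, hq⟩
          rw [hfS' p hp', hfS' q hq'] at hfpq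
          exact hinj' (by simpa using hp') (by simpa using hq') hfpq
    · intro j hj
      by_cases hjj0 : j = j0
      · rw [hjj0, hfj0]
        exact ⟨le_of_eq haj0, by rw [← haj0]; exact hne j0 hj0S⟩
      · have hj' : j ∈ S' := Finset.mem_erase.mpr ⟨hjj0, hj⟩
        rw [hfS' j hj']
        have h1 := (hdom' j hj').1
        have h2 := (hdom' j hj').2
        have : a j ≤ a' j := le_max_left _ _
        exact ⟨le_trans this h1, h2⟩
    · intro p hp q hq hE
      by_cases hpj0 : p = j0
      · have hqj0 : q ≠ j0 := by
          intro h
          rw [hpj0, h] at hE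
          exact hI j0 hE
        have hq' : q ∈ S' := Finset.mem_erase.mpr ⟨hqj0, hq⟩
        rw [hpj0, hfj0]
        exact hfgt q hq'
      · by_cases hqj0 : q = j0
        · rw [hqj0] at hE
          exact absurd hE (hj0Emin p hp)
        · have hp' : p ∈ S' := Finset.mem_erase.mpr ⟨hpj0, hp⟩
          have hq' : q ∈ S' := Finset.mem_erase.mpr ⟨hqj0, hq⟩
          rw [hfS' p hp', hfS' q hq']
          exact hprec' p hp' q hq' hE

open Finset

section Counting
variable {n : ℕ} (mn mx : Fin n → ℤ) (y : Fin n → ℤ)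

lemma countOH (hyinj : Function.Injective y)
    (hydom : ∀ k, y k ∈ Set.Icc (mn k) (mx k)) (l u : ℤ) (hlu : l ≤ u) :
    ((univ.filter fun j : Fin n => l ≤ mn j ∧ mx j ≤ u).card : ℤ) ≤ u - l + 1 := by
  have hle : (univ.filter fun j : Fin n => l ≤ mn j ∧ mx j ≤ u).card ≤ (Finset.Icc l u).card := by
    apply Finset.card_le_card_of_injOn y
    · intro j hj
      simp only [mem_coe, mem_filter] at hj ⊢
      have := hydom j
      simp only [Set.mem_Icc] at this
      rw [Finset.mem_Icc]
      omega
    · exact Function.Injective.injOn hyinj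
  have hc : ((Finset.Icc l u).card : ℤ) = u - l + 1 := by
    rw [Int.card_Icc]
    omega
  calc ((univ.filter fun j : Fin n => l ≤ mn j ∧ mx j ≤ u).card : ℤ)
      ≤ ((Finset.Icc l u).card : ℤ) := by exact_mod_cast hle
    _ = u - l + 1 := hc

lemma countSH (hyinj : Function.Injective y)
    (hydom : ∀ k, y k ∈ Set.Icc (mn k) (mx k)) (i : Fin n) (v : ℤ) (hyi : y i = v)
    (l u : ℤ) (hlv : l ≤ v) (hvu : v ≤ u) :
    ((univ.filter fun j : Fin n => j ≠ i ∧ l ≤ mn j ∧ mx j ≤ u).card : ℤ) ≤ u - l := by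
  have hvmem : v ∈ Finset.Icc l u := by rw [Finset.mem_Icc]; exact ⟨hlv, hvu⟩
  have hle : (univ.filter fun j : Fin n => j ≠ i ∧ l ≤ mn j ∧ mx j ≤ u).card ≤
      ((Finset.Icc l u).erase v).card := by
    apply Finset.card_le_card_of_injOn y
    · intro j hj
      simp only [mem_coe, mem_filter] at hj ⊢
      have := hydom j
      simp only [Set.mem_Icc] at this
      rw [Finset.mem_erase, Finset.mem_Icc]
      refine ⟨?_, by omega, by omega⟩
      intro hyv
      exact hj.2.1 (hyinj (hyv.trans hyi.symm))
    · exact Function.Injective.injOn hyinj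
  have hc : (((Finset.Icc l u).erase v).card : ℤ) = u - l := by
    rw [Finset.card_erase_of_mem hvmem, Int.card_Icc]
    have h1 : (u + 1 - l).toNat = (u + 1 - l) := Int.toNat_of_nonneg (by omega)
    omega
  calc ((univ.filter fun j : Fin n => j ≠ i ∧ l ≤ mn j ∧ mx j ≤ u).card : ℤ)
      ≤ (((Finset.Icc l u).erase v).card : ℤ) := by exact_mod_cast hle
    _ = u - l := hc

end Counting

open Finset

lemma support_min {n : ℕ} (d : ℤ) (E : Fin n → Fin n → Prop) [DecidableRel E]
    (hTrans : Transitive E) (hIrrefl : Irreflexive E)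
    (mn mx : Fin n → ℤ)
    (hNonempty : ∀ j, mn j ≤ mx j)
    (hRange : ∀ j, 1 ≤ mn j ∧ mx j ≤ d)
    (hPrecBC : ∀ a b, E a b → mn a < mn b ∧ mx a < mx b)
    (i : Fin n)
    (y : Fin n → ℤ) (hyinj : Function.Injective y)
    (hydom : ∀ k, y k ∈ Set.Icc (mn k) (mx k)) (hyi : y i = mn i)
    (hPredi : ∀ v ∈ Set.Icc (mn i) (mx i), ∀ l : ℤ,
      1 ≤ l → l ≤ mn i - 1 →
      ((Finset.univ.filter (fun j => E j i ∧ l ≤ mn j)).card : ℤ) +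
        ((Finset.univ.filter
          (fun j => ¬ E j i ∧ j ≠ i ∧ l ≤ mn j ∧ mx j ≤ v)).card : ℤ)
        ≤ v - l) :
    ∃ x : Fin n → ℤ, Function.Injective x ∧
      (∀ j, x j ∈ Set.Icc (mn j) (mx j)) ∧
      (∀ a c, E a c → x a < x c) ∧ x i = mn i := by
  set v := mn i with hv
  set B : Fin n → ℤ := fun j => if E j i then min (mx j) (v - 1) else if j = i then v else mx j
    with hB
  have hBpred : ∀ j, E j i → B j = min (mx j) (v - 1) := by
    intro j h; simp only [hB, if_pos h]
  have hBi : B i = v := by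
    simp [hB, hIrrefl i]
  have hBother : ∀ j, ¬ E j i → j ≠ i → B j = mx j := by
    intro j h1 h2; simp only [hB, if_neg h1, if_neg h2]
  have hBle : ∀ j, B j ≤ mx j := by
    intro j
    by_cases h1 : E j i
    · rw [hBpred j h1]; exact min_le_left _ _
    · by_cases h2 : j = i
      · rw [h2, hBi]; exact hNonempty i
      · rw [hBother j h1 h2]
  have hBge : ∀ j, mn j ≤ B j := by
    intro j
    by_cases h1 : E j i
    · rw [hBpred j h1]
      refine le_min (hNonempty j) ?_
      have := (hPrecBC j i h1).1
      omega
    · by_cases h2 : j = i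
      · rw [h2, hBi]
      · rw [hBother j h1 h2]; exact hNonempty j
  -- monotonicity of the tightened bounds along E
  have hmono : ∀ p q : Fin n, E p q → mn p ≤ mn q ∧ B p ≤ B q := by
    intro p q hpq
    refine ⟨le_of_lt (hPrecBC p q hpq).1, ?_⟩
    by_cases hq : q = i
    · -- p is a predecessor of i
      have hpi : E p i := hq ▸ hpq
      rw [hq, hBi, hBpred p hpi]
      have := (hPrecBC p i hpi).1
      calc min (mx p) (v - 1) ≤ v - 1 := min_le_right _ _
        _ ≤ v := by omega
    · by_cases hqi : E q i
      · -- both p and q are predecessors of i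
        have hpi : E p i := hTrans hpq hqi
        rw [hBpred p hpi, hBpred q hqi]
        exact min_le_min (le_of_lt (hPrecBC p q hpq).2) le_rfl
      · rw [hBother q hqi hq]
        by_cases hp : p = i
        · rw [hp, hBi]
          have := (hPrecBC i q (hp ▸ hpq)).2
          have := hNonempty i
          omega
        · by_cases hpi : E p i
          · rw [hBpred p hpi]
            have := (hPrecBC p q hpq).2
            calc min (mx p) (v - 1) ≤ mx p := min_le_left _ _
              _ ≤ mx q := by omega
          · rw [hBother p hpi hp]
            exact le_of_lt (hPrecBC p q hpq).2
  -- Hall condition for the tightened bounds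
  have hHall : ∀ l u : ℤ, l ≤ u →
      ((univ.filter fun j : Fin n => l ≤ mn j ∧ B j ≤ u).card : ℤ) ≤ u - l + 1 := by
    have key : ∀ l u : ℤ, 1 ≤ l → u ≤ d → l ≤ u →
        ((univ.filter fun j : Fin n => l ≤ mn j ∧ B j ≤ u).card : ℤ) ≤ u - l + 1 := by
      intro l u hl1 hud hlu
      by_cases hdel : mx i ≤ u
      · -- case δ : everything is as in the original instance
        have hsub : (univ.filter fun j : Fin n => l ≤ mn j ∧ B j ≤ u) ⊆
            (univ.filter fun j : Fin n => l ≤ mn j ∧ mx j ≤ u) := by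
          intro j hj
          simp only [mem_filter, mem_univ, true_and] at hj ⊢
          refine ⟨hj.1, ?_⟩
          by_cases h1 : E j i
          · have := (hPrecBC j i h1).2; omega
          · by_cases h2 : j = i
            · rw [h2]; exact hdel
            · rw [← hBother j h1 h2]; exact hj.2
        calc ((univ.filter fun j : Fin n => l ≤ mn j ∧ B j ≤ u).card : ℤ)
            ≤ ((univ.filter fun j : Fin n => l ≤ mn j ∧ mx j ≤ u).card : ℤ) := by
              exact_mod_cast Finset.card_le_card hsub
          _ ≤ u - l + 1 := countOH mn mx y hyinj hydom l u hlu
      · push_neg at hdel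
        by_cases halpha : u ≤ v - 2
        · -- case α
          have hsub : (univ.filter fun j : Fin n => l ≤ mn j ∧ B j ≤ u) ⊆
              (univ.filter fun j : Fin n => l ≤ mn j ∧ mx j ≤ u) := by
            intro j hj
            simp only [mem_filter, mem_univ, true_and] at hj ⊢
            refine ⟨hj.1, ?_⟩
            by_cases h1 : E j i
            · have := hj.2
              rw [hBpred j h1] at this
              rcases min_le_iff.mp this with h | h
              · exact h
              · omega
            · by_cases h2 : j = i
              · exfalso
                have := hj.2
                rw [h2, hBi] at this
                omega
              · rw [← hBother j h1 h2]; exact hj.2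
          calc ((univ.filter fun j : Fin n => l ≤ mn j ∧ B j ≤ u).card : ℤ)
              ≤ ((univ.filter fun j : Fin n => l ≤ mn j ∧ mx j ≤ u).card : ℤ) := by
                exact_mod_cast Finset.card_le_card hsub
            _ ≤ u - l + 1 := countOH mn mx y hyinj hydom l u hlu
        · push_neg at halpha
          by_cases hbeta : u = v - 1
          · -- case β
            have hPl := hPredi v ⟨le_rfl, hNonempty i⟩ l hl1 (by omega)
            have hsub : (univ.filter fun j : Fin n => l ≤ mn j ∧ B j ≤ u) ⊆
                (univ.filter fun j : Fin n => E j i ∧ l ≤ mn j) ∪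
                (univ.filter fun j : Fin n => ¬ E j i ∧ j ≠ i ∧ l ≤ mn j ∧ mx j ≤ v) := by
              intro j hj
              simp only [mem_filter, mem_univ, true_and, mem_union] at hj ⊢
              by_cases h1 : E j i
              · exact Or.inl ⟨h1, hj.1⟩
              · refine Or.inr ⟨h1, ?_, hj.1, ?_⟩
                · intro h2
                  have := hj.2
                  rw [h2, hBi] at this
                  omega
                · have h2 : j ≠ i := by
                    intro h2
                    have := hj.2
                    rw [h2, hBi] at this
                    omega
                  have := hj.2
                  rw [hBother j h1 h2] at this
                  omega
            have hcard := Finset.card_le_card hsub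
            have hcu := Finset.card_union_le
              (univ.filter fun j : Fin n => E j i ∧ l ≤ mn j)
              (univ.filter fun j : Fin n => ¬ E j i ∧ j ≠ i ∧ l ≤ mn j ∧ mx j ≤ v)
            have : ((univ.filter fun j : Fin n => l ≤ mn j ∧ B j ≤ u).card : ℤ) ≤
                ((univ.filter fun j : Fin n => E j i ∧ l ≤ mn j).card : ℤ) +
                ((univ.filter fun j : Fin n => ¬ E j i ∧ j ≠ i ∧ l ≤ mn j ∧ mx j ≤ v).card : ℤ) := by
              exact_mod_cast le_trans hcard hcu
            omega
          · have hvu : v ≤ u := by omega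
            by_cases hgamma1 : l ≤ v - 1
            · -- case γ1 : use hPred at value u
              have hui : u ∈ Set.Icc (mn i) (mx i) := ⟨hvu, le_of_lt hdel⟩
              have hPl := hPredi u hui l hl1 (by omega)
              have hsub : (univ.filter fun j : Fin n => l ≤ mn j ∧ B j ≤ u) ⊆
                  insert i ((univ.filter fun j : Fin n => E j i ∧ l ≤ mn j) ∪
                  (univ.filter fun j : Fin n => ¬ E j i ∧ j ≠ i ∧ l ≤ mn j ∧ mx j ≤ u)) := by
                intro j hj
                simp only [mem_filter, mem_univ, true_and, mem_union, mem_insert] at hj ⊢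
                by_cases h2 : j = i
                · exact Or.inl h2
                · refine Or.inr ?_
                  by_cases h1 : E j i
                  · exact Or.inl ⟨h1, hj.1⟩
                  · refine Or.inr ⟨h1, h2, hj.1, ?_⟩
                    have := hj.2
                    rw [hBother j h1 h2] at this
                    exact this
              have hcard := Finset.card_le_card hsub
              have hins := Finset.card_insert_le i
                ((univ.filter fun j : Fin n => E j i ∧ l ≤ mn j) ∪
                  (univ.filter fun j : Fin n => ¬ E j i ∧ j ≠ i ∧ l ≤ mn j ∧ mx j ≤ u))
              have hcu := Finset.card_union_le
                (univ.filter fun j : Fin n => E j i ∧ l ≤ mn j)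
                (univ.filter fun j : Fin n => ¬ E j i ∧ j ≠ i ∧ l ≤ mn j ∧ mx j ≤ u)
              have : ((univ.filter fun j : Fin n => l ≤ mn j ∧ B j ≤ u).card : ℤ) ≤
                  ((univ.filter fun j : Fin n => E j i ∧ l ≤ mn j).card : ℤ) +
                  ((univ.filter fun j : Fin n =>
                    ¬ E j i ∧ j ≠ i ∧ l ≤ mn j ∧ mx j ≤ u).card : ℤ) + 1 := by
                have h := le_trans hcard (le_trans hins (Nat.succ_le_succ hcu))
                exact_mod_cast h
              omega
            · push_neg at hgamma1
              have hlv : v ≤ l := by omega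
              by_cases hgamma2 : l = v
              · -- case γ2a : use the strengthened Hall condition
                have hSH := countSH mn mx y hyinj hydom i v hyi l u (le_of_eq hgamma2) hvu
                have hsub : (univ.filter fun j : Fin n => l ≤ mn j ∧ B j ≤ u) ⊆
                    insert i (univ.filter fun j : Fin n => j ≠ i ∧ l ≤ mn j ∧ mx j ≤ u) := by
                  intro j hj
                  simp only [mem_filter, mem_univ, true_and, mem_insert] at hj ⊢
                  by_cases h2 : j = i
                  · exact Or.inl h2
                  · refine Or.inr ⟨h2, hj.1, ?_⟩
                    have h1 : ¬ E j i := by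
                      intro h1
                      have := (hPrecBC j i h1).1
                      have := hj.1
                      omega
                    have := hj.2
                    rw [hBother j h1 h2] at this
                    exact this
                have hcard := Finset.card_le_card hsub
                have hins := Finset.card_insert_le i
                  (univ.filter fun j : Fin n => j ≠ i ∧ l ≤ mn j ∧ mx j ≤ u)
                have : ((univ.filter fun j : Fin n => l ≤ mn j ∧ B j ≤ u).card : ℤ) ≤
                    ((univ.filter fun j : Fin n => j ≠ i ∧ l ≤ mn j ∧ mx j ≤ u).card : ℤ) + 1 := by
                  exact_mod_cast le_trans hcard hins
                omega
              · -- case γ2b : l ≥ v + 1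
                have hlv1 : v + 1 ≤ l := by
                  rcases lt_or_eq_of_le hlv with h | h
                  · omega
                  · exact absurd h.symm hgamma2
                have hsub : (univ.filter fun j : Fin n => l ≤ mn j ∧ B j ≤ u) ⊆
                    (univ.filter fun j : Fin n => l ≤ mn j ∧ mx j ≤ u) := by
                  intro j hj
                  simp only [mem_filter, mem_univ, true_and] at hj ⊢
                  refine ⟨hj.1, ?_⟩
                  have h2 : j ≠ i := by
                    intro h2
                    have := hj.1
                    rw [h2] at this
                    omega
                  have h1 : ¬ E j i := by
                    intro h1
                    have := (hPrecBC j i h1).1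
                    have := hj.1
                    omega
                  rw [← hBother j h1 h2]
                  exact hj.2
                calc ((univ.filter fun j : Fin n => l ≤ mn j ∧ B j ≤ u).card : ℤ)
                    ≤ ((univ.filter fun j : Fin n => l ≤ mn j ∧ mx j ≤ u).card : ℤ) := by
                      exact_mod_cast Finset.card_le_card hsub
                  _ ≤ u - l + 1 := countOH mn mx y hyinj hydom l u hlu
    -- clamping
    intro l u hlu
    have heq : (univ.filter fun j : Fin n => l ≤ mn j ∧ B j ≤ u) =
        (univ.filter fun j : Fin n => max l 1 ≤ mn j ∧ B j ≤ min u d) := by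
      apply Finset.filter_congr
      intro j _
      have h1 := (hRange j).1
      have h2 : B j ≤ d := le_trans (hBle j) (hRange j).2
      constructor
      · rintro ⟨ha, hb⟩
        exact ⟨max_le ha h1, le_min hb h2⟩
      · rintro ⟨ha, hb⟩
        exact ⟨le_trans (le_max_left _ _) ha, le_trans hb (min_le_left _ _)⟩
    rw [heq]
    by_cases h : max l 1 ≤ min u d
    · have hk := key (max l 1) (min u d) (le_max_right l 1) (min_le_right u d) h
      have h1 : min u d - max l 1 + 1 ≤ u - l + 1 := by omega
      omega
    · have hempty : (univ.filter fun j : Fin n => max l 1 ≤ mn j ∧ B j ≤ min u d) = ∅ := by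
        rw [Finset.filter_eq_empty_iff]
        intro j _
        rintro ⟨ha, hb⟩
        have := hBge j
        omega
      rw [hempty]
      simp only [Finset.card_empty, Nat.cast_zero]
      omega
  -- apply the greedy lemma
  obtain ⟨f, hinj, hdom, hprec⟩ := greedy E hTrans hIrrefl (Finset.univ : Finset (Fin n)).card
    Finset.univ mn B rfl (fun j _ => hBge j) (fun p _ q _ h => hmono p q h)
    (fun l u hlu => hHall l u hlu)
  refine ⟨f, ?_, ?_, ?_, ?_⟩
  · intro p q h
    exact hinj (Finset.mem_coe.mpr (mem_univ p)) (Finset.mem_coe.mpr (mem_univ q)) h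
  · intro j
    have := hdom j (mem_univ j)
    exact Set.mem_Icc.mpr ⟨this.1, le_trans this.2 (hBle j)⟩
  · exact fun a c h => hprec a (mem_univ a) c (mem_univ c) h
  · have := hdom i (mem_univ i)
    rw [hBi] at this
    exact le_antisymm this.2 this.1

/-- Theorem 1, hard direction: if `E` is transitive and
irreflexive (so the successors of `i` are the `j` with `E i j` and its
predecessors the `j` with `E j i`), all nonempty interval domains are contained
in `[1,d]`, the precedence constraints and the `AllDifferent` constraint are
bounds consistent, and the counting conditions (1)–(6) hold for every variable
`i`, every value `v` in its domain and every interval `[v,u]` with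
`mx i + 1 ≤ u ≤ d` and every interval `[l,v]` with `1 ≤ l ≤ mn i − 1`, then
`AllDiffPrec` is bounds consistent: every bound of every variable has a
support. -/
theorem alldiffprec_bounds_consistent_of_conditions
    (n : ℕ) (d : ℤ) (E : Fin n → Fin n → Prop) [DecidableRel E]
    (hTrans : Transitive E) (hIrrefl : Irreflexive E)
    (mn mx : Fin n → ℤ)
    (hNonempty : ∀ j, mn j ≤ mx j)
    (hRange : ∀ j, 1 ≤ mn j ∧ mx j ≤ d)
    (hPrecBC : ∀ a b, E a b → mn a < mn b ∧ mx a < mx b)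
    (hADBC : ∀ j, ∀ b ∈ ({mn j, mx j} : Set ℤ),
      ∃ y : Fin n → ℤ, Function.Injective y ∧
        (∀ k, y k ∈ Set.Icc (mn k) (mx k)) ∧ y j = b)
    (hSucc : ∀ i : Fin n, ∀ v ∈ Set.Icc (mn i) (mx i), ∀ u : ℤ,
      mx i + 1 ≤ u → u ≤ d →
      ((Finset.univ.filter (fun j => E i j ∧ mx j ≤ u)).card : ℤ) +
        ((Finset.univ.filter
          (fun j => ¬ E i j ∧ j ≠ i ∧ v ≤ mn j ∧ mx j ≤ u)).card : ℤ)
        ≤ u - v)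
    (hPred : ∀ i : Fin n, ∀ v ∈ Set.Icc (mn i) (mx i), ∀ l : ℤ,
      1 ≤ l → l ≤ mn i - 1 →
      ((Finset.univ.filter (fun j => E j i ∧ l ≤ mn j)).card : ℤ) +
        ((Finset.univ.filter
          (fun j => ¬ E j i ∧ j ≠ i ∧ l ≤ mn j ∧ mx j ≤ v)).card : ℤ)
        ≤ v - l) :
    ∀ i : Fin n, ∀ b ∈ ({mn i, mx i} : Set ℤ),
      ∃ x : Fin n → ℤ, Function.Injective x ∧
        (∀ j, x j ∈ Set.Icc (mn j) (mx j)) ∧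
        (∀ a c, E a c → x a < x c) ∧ x i = b := by
  intro i b hb
  simp only [Set.mem_insert_iff, Set.mem_singleton_iff] at hb
  rcases hb with rfl | rfl
  · -- support for the minimum
    obtain ⟨y, hyinj, hydom, hyi⟩ := hADBC i (mn i) (Set.mem_insert _ _)
    exact support_min d E hTrans hIrrefl mn mx hNonempty hRange hPrecBC i y hyinj hydom hyi
      (hPred i)
  · -- support for the maximum, by dualization
    letI hdec : DecidableRel (fun a b : Fin n => E b a) :=
      fun a b => (inferInstance : Decidable (E b a))
    obtain ⟨y, hyinj, hydom, hyi⟩ := hADBC i (mx i)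
      (Set.mem_insert_iff.mpr (Or.inr rfl))
    have hT' : Transitive (fun a b : Fin n => E b a) := fun a b c h1 h2 => hTrans h2 h1
    have hI' : Irreflexive (fun a b : Fin n => E b a) := fun a h => hIrrefl a h
    have hNE' : ∀ j, (fun j => d + 1 - mx j) j ≤ (fun j => d + 1 - mn j) j := by
      intro j; have := hNonempty j; simp only; omega
    have hR' : ∀ j, 1 ≤ (fun j => d + 1 - mx j) j ∧ (fun j => d + 1 - mn j) j ≤ d := by
      intro j; have := hRange j; simp only; omega
    have hPBC' : ∀ a b : Fin n, (fun a b => E b a) a b →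
        (fun j => d + 1 - mx j) a < (fun j => d + 1 - mx j) b ∧
        (fun j => d + 1 - mn j) a < (fun j => d + 1 - mn j) b := by
      intro a c h
      have := hPrecBC c a h
      simp only
      omega
    have hy'inj : Function.Injective (fun k => d + 1 - y k) := by
      intro p q h
      simp only at h
      exact hyinj (by omega)
    have hy'dom : ∀ k, (fun k => d + 1 - y k) k ∈
        Set.Icc ((fun j => d + 1 - mx j) k) ((fun j => d + 1 - mn j) k) := by
      intro k
      have := hydom k
      simp only [Set.mem_Icc] at this ⊢
      omega
    have hy'i : (fun k => d + 1 - y k) i = (fun j => d + 1 - mx j) i := by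
      simp only
      omega
    have hPredi' : ∀ v' ∈ Set.Icc ((fun j => d + 1 - mx j) i) ((fun j => d + 1 - mn j) i),
        ∀ l : ℤ, 1 ≤ l → l ≤ (fun j => d + 1 - mx j) i - 1 →
        ((Finset.univ.filter (fun j => (fun a b : Fin n => E b a) j i ∧
            l ≤ (fun j => d + 1 - mx j) j)).card : ℤ) +
          ((Finset.univ.filter (fun j => ¬ (fun a b : Fin n => E b a) j i ∧ j ≠ i ∧
            l ≤ (fun j => d + 1 - mx j) j ∧ (fun j => d + 1 - mn j) j ≤ v')).card : ℤ)
          ≤ v' - l := by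
      intro v' hv' l hl1 hl2
      simp only [Set.mem_Icc] at hv'
      simp only at hv' hl2
      have hmem : d + 1 - v' ∈ Set.Icc (mn i) (mx i) := by
        simp only [Set.mem_Icc]; omega
      have hS := hSucc i (d + 1 - v') hmem (d + 1 - l) (by omega) (by omega)
      have e1 : Finset.univ.filter (fun j => (fun a b : Fin n => E b a) j i ∧
            l ≤ (fun j => d + 1 - mx j) j) =
          Finset.univ.filter (fun j => E i j ∧ mx j ≤ d + 1 - l) := by
        apply Finset.filter_congr
        intro j _
        simp only
        constructor
        · rintro ⟨h1, h2⟩; exact ⟨h1, by omega⟩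
        · rintro ⟨h1, h2⟩; exact ⟨h1, by omega⟩
      have e2 : Finset.univ.filter (fun j => ¬ (fun a b : Fin n => E b a) j i ∧ j ≠ i ∧
            l ≤ (fun j => d + 1 - mx j) j ∧ (fun j => d + 1 - mn j) j ≤ v') =
          Finset.univ.filter
            (fun j => ¬ E i j ∧ j ≠ i ∧ d + 1 - v' ≤ mn j ∧ mx j ≤ d + 1 - l) := by
        apply Finset.filter_congr
        intro j _
        simp only
        constructor
        · rintro ⟨h1, h2, h3, h4⟩; exact ⟨h1, h2, by omega, by omega⟩
        · rintro ⟨h1, h2, h3, h4⟩; exact ⟨h1, h2, by omega, by omega⟩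
      rw [e1, e2]
      have hr : (v' - l : ℤ) = d + 1 - l - (d + 1 - v') := by ring
      rw [hr]
      exact hS
    obtain ⟨x', hx'inj, hx'dom, hx'prec, hx'i⟩ :=
      support_min d (fun a b : Fin n => E b a) hT' hI'
        (fun j => d + 1 - mx j) (fun j => d + 1 - mn j) hNE' hR' hPBC' i
        (fun k => d + 1 - y k) hy'inj hy'dom hy'i hPredi'
    refine ⟨fun j => d + 1 - x' j, ?_, ?_, ?_, ?_⟩
    · intro p q h
      simp only at h
      exact hx'inj (by omega)
    · intro j
      have := hx'dom j
      simp only [Set.mem_Icc] at this ⊢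
      omega
    · intro a c h
      have := hx'prec c a h
      simp only
      omega
    · simp only at hx'i ⊢
      omega
end

section
/- Let the variables have nonempty integer interval domains, let L = {min_1,…,min_n} be the set of all domain lower bounds and U = {max_1,…,max_n} the set of all domain upper bounds. Let i be an index, v ∈ D(X_i), and k an integer with v + k ≥ max_i + 1, and suppose the interval [v, v+k] violates the successor-side counting conditions for i, i.e., B^i_{1,v+k} + D^i_{v,v+k} > k. Then there exists an interval [l,u] ⊆ [v, v+k] with l, u ∈ L ∪ U that also violates the conditions, and whose violation cost c_{l,u} = B^i_{1,u} + D^i_{l,u} − (u − l) satisfies c_{l,u} > l − v. -/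
/-- Observation 1: let `L` (resp. `U`) be the set of all domain
lower (resp. upper) bounds, `S` the set of successors of `i`.  If the interval
`[v, v+k]` (with `v ∈ D(X_i)` and `v + k ≥ mx i + 1`) violates the
successor-side counting conditions, i.e.
`B^i_{1,v+k} + D^i_{v,v+k} > k`, then there is a violated interval
`[l,u] ⊆ [v, v+k]` with `l, u ∈ L ∪ U` whose violation cost
`c_{l,u} = B^i_{1,u} + D^i_{l,u} − (u − l)` satisfies `c_{l,u} > l − v`. -/
theorem violated_interval_at_bounds
    (n : ℕ) (E : Fin n → Fin n → Prop)
    (mn mx : Fin n → ℤ)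
    (hNonempty : ∀ j, mn j ≤ mx j)
    (i : Fin n) (S : Finset (Fin n))
    (hS : ∀ j, j ∈ S ↔ Relation.TransGen E i j)
    (v k : ℤ)
    (hv : v ∈ Set.Icc (mn i) (mx i))
    (hk : mx i + 1 ≤ v + k)
    (hviol : ((S.filter (fun j => mx j ≤ v + k)).card : ℤ) +
      ((Finset.univ.filter
        (fun j => j ∉ S ∧ j ≠ i ∧ v ≤ mn j ∧ mx j ≤ v + k)).card : ℤ) > k) :
    ∃ l u : ℤ, v ≤ l ∧ l ≤ u ∧ u ≤ v + k ∧
      l ∈ Finset.univ.image mn ∪ Finset.univ.image mx ∧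
      u ∈ Finset.univ.image mn ∪ Finset.univ.image mx ∧
      ((S.filter (fun j => mx j ≤ u)).card : ℤ) +
        ((Finset.univ.filter
          (fun j => j ∉ S ∧ j ≠ i ∧ l ≤ mn j ∧ mx j ≤ u)).card : ℤ) > u - l ∧
      ((S.filter (fun j => mx j ≤ u)).card : ℤ) +
        ((Finset.univ.filter
          (fun j => j ∉ S ∧ j ≠ i ∧ l ≤ mn j ∧ mx j ≤ u)).card : ℤ) - (u - l)
        > l - v := by
  classical
  set Bset := S.filter (fun j => mx j ≤ v + k) with hB
  set Dset := Finset.univ.filter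
      (fun j => j ∉ S ∧ j ≠ i ∧ v ≤ mn j ∧ mx j ≤ v + k) with hD
  have hk1 : (1 : ℤ) ≤ k := by
    have := hv.2
    linarith
  -- the union is nonempty
  have hTne : (Bset ∪ Dset).Nonempty := by
    rw [Finset.nonempty_iff_ne_empty]
    intro h
    have h1 : Bset = ∅ ∧ Dset = ∅ := by
      constructor <;> [exact Finset.union_eq_empty.mp h |>.1;
        exact Finset.union_eq_empty.mp h |>.2]
    rw [h1.1, h1.2] at hviol
    simp at hviol
    linarith
  have hTmx : ∀ j ∈ Bset ∪ Dset, mx j ≤ v + k := by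
    intro j hj
    rcases Finset.mem_union.mp hj with hj | hj
    · exact (Finset.mem_filter.mp hj).2
    · exact (Finset.mem_filter.mp hj).2.2.2.2
  obtain ⟨j1, hj1, hj1max⟩ := Finset.exists_max_image (Bset ∪ Dset) mx hTne
  set u := mx j1 with hu
  have huU : u ∈ Finset.univ.image mn ∪ Finset.univ.image mx := by
    apply Finset.mem_union_right
    exact Finset.mem_image.mpr ⟨j1, Finset.mem_univ _, rfl⟩
  have huK : u ≤ v + k := hTmx j1 hj1
  -- monotonicity of the B-count
  have hBsub : ∀ l' u' : ℤ, (∀ j ∈ Bset, mx j ≤ u') →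
      ((Bset.card : ℤ)) ≤ ((S.filter (fun j => mx j ≤ u')).card : ℤ) := by
    intro l' u' h
    have : Bset ⊆ S.filter (fun j => mx j ≤ u') := by
      intro j hj
      exact Finset.mem_filter.mpr ⟨(Finset.mem_filter.mp hj).1, h j hj⟩
    exact_mod_cast Finset.card_le_card this
  by_cases hDne : Dset.Nonempty
  · -- l := min of mn over Dset
    obtain ⟨j0, hj0, hj0min⟩ := Finset.exists_min_image Dset mn hDne
    set l := mn j0 with hl
    have hj0' := Finset.mem_filter.mp hj0
    have hvl : v ≤ l := hj0'.2.2.2.1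
    have hlu : l ≤ u := le_trans (hNonempty j0)
      (hj1max j0 (Finset.mem_union_right _ hj0))
    have hlL : l ∈ Finset.univ.image mn ∪ Finset.univ.image mx := by
      apply Finset.mem_union_left
      exact Finset.mem_image.mpr ⟨j0, Finset.mem_univ _, rfl⟩
    have hBle : ((Bset.card : ℤ)) ≤ ((S.filter (fun j => mx j ≤ u)).card : ℤ) :=
      hBsub l u (fun j hj => hj1max j (Finset.mem_union_left _ hj))
    have hDle : ((Dset.card : ℤ)) ≤
        ((Finset.univ.filter
          (fun j => j ∉ S ∧ j ≠ i ∧ l ≤ mn j ∧ mx j ≤ u)).card : ℤ) := by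
      have : Dset ⊆ Finset.univ.filter
          (fun j => j ∉ S ∧ j ≠ i ∧ l ≤ mn j ∧ mx j ≤ u) := by
        intro j hj
        have hj' := Finset.mem_filter.mp hj
        refine Finset.mem_filter.mpr ⟨Finset.mem_univ _,
          hj'.2.1, hj'.2.2.1, hj0min j hj, hj1max j (Finset.mem_union_right _ hj)⟩
      exact_mod_cast Finset.card_le_card this
    exact ⟨l, u, hvl, hlu, huK, hlL, huU, by linarith, by linarith⟩
  · -- Dset empty: take l = u = max(mx j1, mx i)
    have hDempty : Dset = ∅ := Finset.not_nonempty_iff_eq_empty.mp hDne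
    have hBgt : (Bset.card : ℤ) > k := by
      rw [hDempty] at hviol
      simpa using hviol
    set u2 := max u (mx i) with hu2
    have hu2U : u2 ∈ Finset.univ.image mn ∪ Finset.univ.image mx := by
      apply Finset.mem_union_right
      rcases max_choice u (mx i) with h | h
      · rw [hu2, h]; exact Finset.mem_image.mpr ⟨j1, Finset.mem_univ _, rfl⟩
      · rw [hu2, h]; exact Finset.mem_image.mpr ⟨i, Finset.mem_univ _, rfl⟩
    have hvu2 : v ≤ u2 := le_trans hv.2 (le_max_right _ _)
    have hu2K : u2 ≤ v + k := max_le huK (by linarith)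
    have hBle : ((Bset.card : ℤ)) ≤ ((S.filter (fun j => mx j ≤ u2)).card : ℤ) :=
      hBsub u2 u2 (fun j hj =>
        le_trans (hj1max j (Finset.mem_union_left _ hj)) (le_max_left _ _))
    have hDpos : (0 : ℤ) ≤ ((Finset.univ.filter
          (fun j => j ∉ S ∧ j ≠ i ∧ u2 ≤ mn j ∧ mx j ≤ u2)).card : ℤ) := by
      positivity
    exact ⟨u2, u2, hvu2, le_refl _, hu2K, hu2U, hu2U, by linarith, by linarith⟩
end

section
/- Let the variables have nonempty integer interval domains and let i be an index. Suppose the interval [l,u] violates the successor-side counting conditions for i with violation cost c = B^i_{1,u} + D^i_{l,u} − (u − l) ≥ 1. Then every interval [l', u] with l − (c − 1) ≤ l' ≤ l also violates the conditions, i.e., B^i_{1,u} + D^i_{l',u} > u − l'. Consequently the whole interval [l − (c−1), u] can be removed from D(X_i). -/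
/-- if the interval `[l,u]` violates the successor-side counting
conditions for variable `i` with violation cost
`c = B^i_{1,u} + D^i_{l,u} − (u − l) ≥ 1`, then every interval `[l',u]` with
`l − (c−1) ≤ l' ≤ l` also violates the conditions, and consequently no solution
of `AllDiffPrec` assigns `X_i` a value in `[l − (c−1), u]` (the whole interval
can be removed from `D(X_i)`). -/
theorem violation_cost_interval_pruning
    (n : ℕ) (E : Fin n → Fin n → Prop)
    (mn mx : Fin n → ℤ)
    (hNonempty : ∀ j, mn j ≤ mx j)
    (i : Fin n) (S : Finset (Fin n))
    (hS : ∀ j, j ∈ S ↔ Relation.TransGen E i j)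
    (l u c : ℤ) (hlu : l ≤ u)
    (hc : c = ((S.filter (fun j => mx j ≤ u)).card : ℤ) +
      ((Finset.univ.filter
        (fun j => j ∉ S ∧ j ≠ i ∧ l ≤ mn j ∧ mx j ≤ u)).card : ℤ) - (u - l))
    (hc1 : 1 ≤ c) :
    (∀ l' : ℤ, l - (c - 1) ≤ l' → l' ≤ l →
      ((S.filter (fun j => mx j ≤ u)).card : ℤ) +
        ((Finset.univ.filter
          (fun j => j ∉ S ∧ j ≠ i ∧ l' ≤ mn j ∧ mx j ≤ u)).card : ℤ)
        > u - l') ∧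
    (∀ x : Fin n → ℤ, (∀ j, x j ∈ Set.Icc (mn j) (mx j)) →
      Function.Injective x → (∀ a b, E a b → x a < x b) →
      x i ∉ Set.Icc (l - (c - 1)) u) := by
  have hpart1 : ∀ l' : ℤ, l - (c - 1) ≤ l' → l' ≤ l →
      ((S.filter (fun j => mx j ≤ u)).card : ℤ) +
        ((Finset.univ.filter
          (fun j => j ∉ S ∧ j ≠ i ∧ l' ≤ mn j ∧ mx j ≤ u)).card : ℤ)
        > u - l' := by
    intro l' h1 h2
    have hsub : (Finset.univ.filter (fun j => j ∉ S ∧ j ≠ i ∧ l ≤ mn j ∧ mx j ≤ u)) ⊆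
        (Finset.univ.filter (fun j => j ∉ S ∧ j ≠ i ∧ l' ≤ mn j ∧ mx j ≤ u)) := by
      intro j hj
      simp only [Finset.mem_filter] at hj ⊢
      exact ⟨hj.1, hj.2.1, hj.2.2.1, le_trans h2 hj.2.2.2.1, hj.2.2.2.2⟩
    have hcard := Finset.card_le_card hsub
    have hcard' : ((Finset.univ.filter
        (fun j => j ∉ S ∧ j ≠ i ∧ l ≤ mn j ∧ mx j ≤ u)).card : ℤ) ≤
        ((Finset.univ.filter
        (fun j => j ∉ S ∧ j ≠ i ∧ l' ≤ mn j ∧ mx j ≤ u)).card : ℤ) := by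
      exact_mod_cast hcard
    linarith
  refine ⟨hpart1, ?_⟩
  intro x hx hinj hmono hxi
  obtain ⟨hxi1, hxi2⟩ := hxi
  have hmonoT : ∀ a b, Relation.TransGen E a b → x a < x b := by
    intro a b h
    induction h with
    | single h => exact hmono _ _ h
    | tail _ h ih => exact ih.trans (hmono _ _ h)
  have hiS : i ∉ S := fun h => lt_irrefl (x i) (hmonoT i i ((hS i).1 h))
  set l' : ℤ := min (x i) l with hl'
  have hl'xi : l' ≤ x i := min_le_left _ _
  have hl'u : l' ≤ u := hl'xi.trans hxi2
  have hB := hpart1 l' (le_min (by linarith) (by linarith)) (min_le_right _ _)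
  set A := S.filter (fun j => mx j ≤ u) with hA
  set Ds := Finset.univ.filter (fun j => j ∉ S ∧ j ≠ i ∧ l' ≤ mn j ∧ mx j ≤ u) with hDs
  have hdisj : Disjoint A Ds := by
    rw [Finset.disjoint_left]
    intro j hjA hjD
    simp only [hA, hDs, Finset.mem_filter] at hjA hjD
    exact hjD.2.1 hjA.1
  have hiAD : i ∉ A ∪ Ds := by
    simp only [Finset.mem_union, hA, hDs, Finset.mem_filter]
    rintro (⟨h, -⟩ | ⟨-, -, h, -⟩)
    · exact hiS h
    · exact h rfl
  set T := insert i (A ∪ Ds) with hT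
  have hTcard : T.card = A.card + Ds.card + 1 := by
    rw [hT, Finset.card_insert_of_notMem hiAD, Finset.card_union_of_disjoint hdisj]
  have hmap : ∀ j ∈ T, x j ∈ Finset.Icc l' u := by
    intro j hj
    simp only [hT, Finset.mem_insert, Finset.mem_union] at hj
    rcases hj with rfl | hj | hj
    · exact Finset.mem_Icc.2 ⟨hl'xi, hxi2⟩
    · simp only [hA, Finset.mem_filter] at hj
      have h1 : x i < x j := hmonoT i j ((hS j).1 hj.1)
      have h2 : x j ≤ mx j := (hx j).2
      exact Finset.mem_Icc.2 ⟨by linarith, by linarith [hj.2]⟩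
    · simp only [hDs, Finset.mem_filter] at hj
      obtain ⟨-, -, -, hmn, hmx⟩ := hj
      exact Finset.mem_Icc.2 ⟨hmn.trans (hx j).1, (hx j).2.trans hmx⟩
  have hle : T.card ≤ (Finset.Icc l' u).card :=
    Finset.card_le_card_of_injOn x hmap (fun a _ b _ h => hinj h)
  rw [Int.card_Icc] at hle
  have htn : ((u + 1 - l').toNat : ℤ) = u + 1 - l' := Int.toNat_of_nonneg (by linarith)
  have hle' : (T.card : ℤ) ≤ u + 1 - l' := by
    rw [← htn]; exact_mod_cast hle
  rw [hTcard] at hle'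
  push_cast at hle'
  linarith
end

section
/- Let N, M ≥ 1 and let a 3-CNF formula over Boolean variables x_1,…,x_N be given by clauses C_1,…,C_M, where each clause C_m consists of three literals, each literal being a pair (k, s) with k ∈ {1,…,N} and s ∈ {true, false} (s = true for the positive literal x_k, s = false for ¬x_k). Construct an AllDiffPrec instance on n = 2N + 3M integer variables as follows. For 1 ≤ i ≤ N: D(X_{2i−1}) = D(X_{2i}) = {i, N+M+i}. For 1 ≤ m ≤ M and 1 ≤ t ≤ 3: D(X_{2N+3(m−1)+t}) = {N+m, 2N+M+2m−1, 2N+M+2m}. The precedence set E contains, for each clause m and each position t with literal (k, s) in C_m: the pair (2k, 2N+3(m−1)+t) if s = true, and the pair (2k−1, 2N+3(m−1)+t) if s = false. Then AllDiffPrec([X_1,…,X_n], E) has a solution if and only if there exists a truth assignment f : {1,…,N} → {true, false} satisfying at least one literal of every clause (i.e., the 3-CNF formula is satisfiable). This is the reduction establishing that enforcing domain consistency on AllDiffPrec is NP-hard. -/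
/-- NP-hardness reduction from 3-SAT: given a 3-CNF formula with
`N ≥ 1` variables and `M ≥ 1` clauses, where clause `m` consists of the three
literals `C m t = (k, s)` (variable `k`, sign `s`), build the `AllDiffPrec`
instance on `2N + 3M` variables.  The truth-assignment variable `X_{2i-1}`
(resp. `X_{2i}`) is indexed by `Sum.inl (i, false)` (resp. `Sum.inl (i, true)`)
and has domain `{i, N+M+i}`; the clause variable `X_{2N+3(m-1)+t}` is indexed
by `Sum.inr (m, t)` and has domain `{N+m, 2N+M+2m-1, 2N+M+2m}` (indices `i`,
`m` written `1`-based).  The precedence set contains, for each clause `m` and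
position `t` with literal `(k, s)`, the edge from `Sum.inl (k, s)` (i.e. `X_{2k}`
if `s = true`, `X_{2k-1}` if `s = false`) to `Sum.inr (m, t)`.  Then the
`AllDiffPrec` instance has a solution iff the 3-CNF formula is satisfiable. -/
theorem alldiffprec_sat_reduction
    (N M : ℕ) (hN : 1 ≤ N) (hM : 1 ≤ M)
    (C : Fin M → Fin 3 → Fin N × Bool) :
    (∃ x : (Fin N × Bool) ⊕ (Fin M × Fin 3) → ℤ,
      Function.Injective x ∧
      (∀ i : Fin N, ∀ s : Bool,
        x (Sum.inl (i, s)) ∈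
          ({(i : ℤ) + 1, (N : ℤ) + (M : ℤ) + (i : ℤ) + 1} : Set ℤ)) ∧
      (∀ m : Fin M, ∀ t : Fin 3,
        x (Sum.inr (m, t)) ∈
          ({(N : ℤ) + (m : ℤ) + 1,
            2 * (N : ℤ) + (M : ℤ) + 2 * ((m : ℤ) + 1) - 1,
            2 * (N : ℤ) + (M : ℤ) + 2 * ((m : ℤ) + 1)} : Set ℤ)) ∧
      (∀ m : Fin M, ∀ t : Fin 3,
        x (Sum.inl (C m t)) < x (Sum.inr (m, t)))) ↔
    (∃ f : Fin N → Bool, ∀ m : Fin M, ∃ t : Fin 3, f (C m t).1 = (C m t).2) := by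
  constructor
  · rintro ⟨x, hinj, hdom1, hdom2, hprec⟩
    refine ⟨fun i => decide (x (Sum.inl (i, true)) = (i : ℤ) + 1), fun m => ?_⟩
    have hmM : (m : ℤ) < M := by exact_mod_cast m.isLt
    -- some clause position takes the small value
    have hsmall : ∃ t : Fin 3, x (Sum.inr (m, t)) = (N : ℤ) + m + 1 := by
      by_contra h
      push_neg at h
      have h0 := hdom2 m 0
      have h1 := hdom2 m 1
      have h2 := hdom2 m 2
      simp only [Set.mem_insert_iff, Set.mem_singleton_iff] at h0 h1 h2
      have e0 : x (Sum.inr (m, 0)) = 2 * (N:ℤ) + M + 2 * ((m:ℤ)+1) - 1 ∨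
          x (Sum.inr (m, 0)) = 2 * (N:ℤ) + M + 2 * ((m:ℤ)+1) := by
        rcases h0 with h0|h0|h0
        · exact absurd h0 (h 0)
        · exact Or.inl h0
        · exact Or.inr h0
      have e1 : x (Sum.inr (m, 1)) = 2 * (N:ℤ) + M + 2 * ((m:ℤ)+1) - 1 ∨
          x (Sum.inr (m, 1)) = 2 * (N:ℤ) + M + 2 * ((m:ℤ)+1) := by
        rcases h1 with h1|h1|h1
        · exact absurd h1 (h 1)
        · exact Or.inl h1
        · exact Or.inr h1
      have e2 : x (Sum.inr (m, 2)) = 2 * (N:ℤ) + M + 2 * ((m:ℤ)+1) - 1 ∨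
          x (Sum.inr (m, 2)) = 2 * (N:ℤ) + M + 2 * ((m:ℤ)+1) := by
        rcases h2 with h2|h2|h2
        · exact absurd h2 (h 2)
        · exact Or.inl h2
        · exact Or.inr h2
      rcases e0 with e0|e0 <;> rcases e1 with e1|e1 <;> rcases e2 with e2|e2 <;>
        first
        | exact absurd (hinj (e0.trans e1.symm)) (by simp)
        | exact absurd (hinj (e0.trans e2.symm)) (by simp)
        | exact absurd (hinj (e1.trans e2.symm)) (by simp)
    obtain ⟨t, ht⟩ := hsmall
    refine ⟨t, ?_⟩
    have hp := hprec m t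
    rcases hc : C m t with ⟨k, s⟩
    rw [hc] at hp
    rw [ht] at hp
    have hkN : (k : ℤ) < N := by exact_mod_cast k.isLt
    have hd := hdom1 k s
    simp only [Set.mem_insert_iff, Set.mem_singleton_iff] at hd
    have hd' : x (Sum.inl (k, s)) = (k : ℤ) + 1 := by
      rcases hd with hd|hd
      · exact hd
      · omega
    simp only [hc]
    cases s with
    | true => simp [hd']
    | false =>
      simp only [decide_eq_false_iff_not]
      intro he
      have := hinj (he.trans hd'.symm)
      simp at this
  · rintro ⟨f, hf⟩
    choose t₀ ht₀ using hf
    refine ⟨fun a => match a with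
      | Sum.inl (i, s) => if f i = s then (i : ℤ) + 1 else (N : ℤ) + M + i + 1
      | Sum.inr (m, t) => if t = t₀ m then (N : ℤ) + m + 1
          else 2 * (N : ℤ) + M + 2 * (m : ℤ) + 1 +
            (if (t : ℕ) < (t₀ m : ℕ) then (t : ℤ) else (t : ℤ) - 1),
      ?_, ?_, ?_, ?_⟩
    · -- injectivity
      rintro (⟨i, s⟩ | ⟨m, t⟩) (⟨j, u⟩ | ⟨m', t'⟩) hab <;>
        simp only at hab
      · -- inl inl
        have hiN : (i : ℤ) < N := by exact_mod_cast i.isLt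
        have hjN : (j : ℤ) < N := by exact_mod_cast j.isLt
        split_ifs at hab with h1 h2 h2
        · have hij : i = j := by
            have : (i : ℕ) = (j : ℕ) := by omega
            exact Fin.ext this
          subst hij
          have : s = u := by rw [← h1, ← h2]
          rw [this]
        · omega
        · omega
        · have hij : i = j := by
            have : (i : ℕ) = (j : ℕ) := by omega
            exact Fin.ext this
          subst hij
          have : s = u := by
            revert h1 h2; cases f i <;> cases s <;> cases u <;> simp
          rw [this]
      · -- inl inr : impossible
        exfalso
        have hiN : (i : ℤ) < N := by exact_mod_cast i.isLt
        have hmM : (m' : ℤ) < M := by exact_mod_cast m'.isLt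
        have htv : (t' : ℕ) < 3 := t'.isLt
        have htv0 : (t₀ m' : ℕ) < 3 := (t₀ m').isLt
        split_ifs at hab with h1 h2 h3 h4 h5 h6 <;>
        · first
          | omega
          | (have hne : (t' : ℕ) ≠ (t₀ m' : ℕ) := by
              intro h; exact ‹¬ t' = t₀ m'› (Fin.ext h)
             omega)
      · -- inr inl : impossible
        exfalso
        have hjN : (j : ℤ) < N := by exact_mod_cast j.isLt
        have hmM : (m : ℤ) < M := by exact_mod_cast m.isLt
        have htv : (t : ℕ) < 3 := t.isLt
        have htv0 : (t₀ m : ℕ) < 3 := (t₀ m).isLt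
        split_ifs at hab with h1 h2 h3 h4 h5 h6 <;>
        · first
          | omega
          | (have hne : (t : ℕ) ≠ (t₀ m : ℕ) := by
              intro h; exact ‹¬ t = t₀ m› (Fin.ext h)
             omega)
      · -- inr inr
        have hmM : (m : ℤ) < M := by exact_mod_cast m.isLt
        have hm'M : (m' : ℤ) < M := by exact_mod_cast m'.isLt
        have htv : (t : ℕ) < 3 := t.isLt
        have ht'v : (t' : ℕ) < 3 := t'.isLt
        have htv0 : (t₀ m : ℕ) < 3 := (t₀ m).isLt
        have htv0' : (t₀ m' : ℕ) < 3 := (t₀ m').isLt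
        by_cases h1 : t = t₀ m <;> by_cases h2 : t' = t₀ m'
        · rw [if_pos h1, if_pos h2] at hab
          have hmm : m = m' := Fin.ext (by omega)
          subst hmm
          rw [h1, h2]
        · rw [if_pos h1, if_neg h2] at hab
          have hne : (t' : ℕ) ≠ (t₀ m' : ℕ) := fun h => h2 (Fin.ext h)
          split_ifs at hab <;> omega
        · rw [if_neg h1, if_pos h2] at hab
          have hne : (t : ℕ) ≠ (t₀ m : ℕ) := fun h => h1 (Fin.ext h)
          split_ifs at hab <;> omega
        · rw [if_neg h1, if_neg h2] at hab
          have hne : (t : ℕ) ≠ (t₀ m : ℕ) := fun h => h1 (Fin.ext h)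
          have hne' : (t' : ℕ) ≠ (t₀ m' : ℕ) := fun h => h2 (Fin.ext h)
          have hmm : m = m' := by
            apply Fin.ext
            split_ifs at hab <;> omega
          subst hmm
          have htt : t = t' := by
            apply Fin.ext
            split_ifs at hab <;> omega
          rw [htt]
    · -- domain 1
      intro i s
      simp only [Set.mem_insert_iff, Set.mem_singleton_iff]
      split_ifs <;> [left; right] <;> ring
    · -- domain 2
      intro m t
      simp only [Set.mem_insert_iff, Set.mem_singleton_iff]
      have hne : t ≠ t₀ m → (t : ℕ) ≠ (t₀ m : ℕ) := fun h hh => h (Fin.ext hh)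
      have htv : (t : ℕ) < 3 := t.isLt
      have htv0 : (t₀ m : ℕ) < 3 := (t₀ m).isLt
      split_ifs with h1 h2
      · left; rfl
      · right
        rcases Nat.lt_or_ge (t : ℕ) 1 with h | h
        · left; omega
        · right; omega
      · have := hne h1
        right
        rcases Nat.lt_or_ge (t : ℕ) 2 with h | h
        · left; omega
        · right; omega
    · -- precedences
      intro m t
      rcases hc : C m t with ⟨k, s⟩
      simp only
      have hkN : (k : ℤ) < N := by exact_mod_cast k.isLt
      have hmM : (m : ℤ) < M := by exact_mod_cast m.isLt
      have htv : (t : ℕ) < 3 := t.isLt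
      have htv0 : (t₀ m : ℕ) < 3 := (t₀ m).isLt
      by_cases h1 : t = t₀ m
      · have hks : f k = s := by
          have := ht₀ m
          rw [← h1, hc] at this
          exact this
        rw [if_pos h1, if_pos hks]
        omega
      · have hne : (t : ℕ) ≠ (t₀ m : ℕ) := fun h => h1 (Fin.ext h)
        rw [if_neg h1]
        split_ifs <;> omega
end
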